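/- arXiv:1702.01588 — 7 statements merged into one kernel-verified Lean document; each statement's English description precedes it below -/
import Mathlib

section
/- Let S be a set with a transitive binary relation ≺ satisfying condition (*): for each a ∈ S there exists a sequence (a_n) with a_n ≺ a_{n+1} ≺ a for all n, and such that whenever a' ≺ a there exists n₀ with a' ≺ a_{n₀}. Then for every a ∈ S there exists a family (a_λ) indexed by λ ∈ (0,1) ∩ ℚ such that a_{λ'} ≺ a_λ whenever λ' < λ, and such that for every a' ∈ S with a' ≺ a there exists μ ∈ (0,1) ∩ ℚ with a' ≺ a_μ. -/
namespace Stmt1Aux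

variable {S : Type*}

/-- Specification for the element to be inserted at stage `n`. -/
def P (r : S → S → Prop) (a : S) (f : ℕ → S) (q : ℕ → ℚ) (prev : ℕ → S) (n : ℕ)
    (z : S) : Prop :=
  (∀ i < n, (q i < q n → r (prev i) z) ∧ (q n < q i → r z (prev i))) ∧ r z a ∧
    ((∀ i < n, q i < q n) → r (f n) z)

open Classical in
noncomputable def step (r : S → S → Prop) (a : S) (f : ℕ → S) (q : ℕ → ℚ)
    (prev : ℕ → S) (n : ℕ) : S :=
  if h : ∃ z, P r a f q prev n z then h.choose else a

noncomputable def F (r : S → S → Prop) (a : S) (f : ℕ → S) (q : ℕ → ℚ) : ℕ → ℕ → S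
  | 0 => fun _ => a
  | n + 1 => fun m => if m = n then step r a f q (F r a f q n) n else F r a f q n m

noncomputable def G (r : S → S → Prop) (a : S) (f : ℕ → S) (q : ℕ → ℚ) (n : ℕ) : S :=
  F r a f q (n + 1) n

lemma G_eq (r : S → S → Prop) (a : S) (f : ℕ → S) (q : ℕ → ℚ) (n : ℕ) :
    G r a f q n = step r a f q (F r a f q n) n := by
  simp [G, F]

lemma F_eq (r : S → S → Prop) (a : S) (f : ℕ → S) (q : ℕ → ℚ) :
    ∀ n m, m < n → F r a f q n m = G r a f q m := by
  intro n
  induction n with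
  | zero => intro m hm; omega
  | succ n ih =>
    intro m hm
    rcases Nat.lt_succ_iff_lt_or_eq.mp hm with h | h
    · have : m ≠ n := by omega
      simp [F, this, ih m h]
    · subst h
      simp [F, G]

end Stmt1Aux

/-- If a transitive relation `r` on `S` satisfies condition (*), then every element `a`
admits a chain indexed by the rationals in `(0,1)`, strictly increasing with respect to
`r`, which is cofinal among the predecessors of `a`. -/
theorem stmt1 {S : Type*} (r : S → S → Prop)
    (htrans : ∀ ⦃a b c : S⦄, r a b → r b c → r a c)
    (hstar : ∀ a : S, ∃ f : ℕ → S, (∀ n, r (f n) (f (n + 1))) ∧ (∀ n, r (f (n + 1)) a) ∧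
      (∀ a' : S, r a' a → ∃ n, r a' (f n)))
    (a : S) :
    ∃ g : {q : ℚ // 0 < q ∧ q < 1} → S,
      (∀ l m : {q : ℚ // 0 < q ∧ q < 1}, l.1 < m.1 → r (g l) (g m)) ∧
      (∀ a' : S, r a' a → ∃ μ : {q : ℚ // 0 < q ∧ q < 1}, r a' (g μ)) := by
  classical
  obtain ⟨f, hf1, hf2, hf3⟩ := hstar a
  -- density of r
  have hdense : ∀ x y : S, r x y → ∃ z, r x z ∧ r z y := by
    intro x y hxy
    obtain ⟨g, hg1, hg2, hg3⟩ := hstar y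
    obtain ⟨n, hn⟩ := hg3 x hxy
    exact ⟨g (n + 1), htrans hn (hg1 n), hg2 n⟩
  -- every element has a predecessor
  have hbelow : ∀ y : S, ∃ z, r z y := by
    intro y
    obtain ⟨g, hg1, hg2, _⟩ := hstar y
    exact ⟨g 1, hg2 0⟩
  -- f is an r-chain
  have hchain : ∀ m j : ℕ, m < j → r (f m) (f j) := by
    intro m j hmj
    induction j with
    | zero => omega
    | succ j ih =>
      rcases Nat.lt_succ_iff_lt_or_eq.mp hmj with h | h
      · exact htrans (ih h) (hf1 j)
      · subst h; exact hf1 m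
  -- an enumeration of the rationals in (0,1)
  haveI : Infinite {q : ℚ // 0 < q ∧ q < 1} := by
    refine Infinite.of_injective (fun n : ℕ => ⟨((n : ℚ) + 2)⁻¹, ?_, ?_⟩) ?_
    · positivity
    · rw [inv_lt_one_iff₀]
      right
      have : (0 : ℚ) ≤ (n : ℚ) := by positivity
      linarith
    · intro m n h
      have h2 : ((m : ℚ) + 2)⁻¹ = ((n : ℚ) + 2)⁻¹ := congrArg Subtype.val h
      have h3 := inv_injective h2
      have h4 : (m : ℚ) = (n : ℚ) := by linarith
      exact_mod_cast h4
  obtain ⟨e⟩ : Nonempty (ℕ ≃ {q : ℚ // 0 < q ∧ q < 1}) := nonempty_equiv_of_countable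
  set q : ℕ → ℚ := fun n => (e n).1 with hq
  have hqinj : Function.Injective q := by
    intro i j h
    exact e.injective (Subtype.ext h)
  set G : ℕ → S := Stmt1Aux.G r a f q with hGdef
  -- main invariant
  have Inv : ∀ n : ℕ,
      (∀ i j, i < n → j < n → q i < q j → r (G i) (G j)) ∧
      (∀ i < n, r (G i) a) ∧
      (∀ i < n, (∀ k < i, q k < q i) → r (f i) (G i)) := by
    intro n
    induction n with
    | zero => exact ⟨fun i j hi => by omega, fun i hi => by omega, fun i hi => by omega⟩
    | succ n ih =>
      obtain ⟨ih1, ih2, ih3⟩ := ih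
      -- existence of a suitable element at stage n
      have hex : ∃ z, Stmt1Aux.P r a f q (Stmt1Aux.F r a f q n) n z := by
        have hFG : ∀ i < n, Stmt1Aux.F r a f q n i = G i := fun i hi =>
          Stmt1Aux.F_eq r a f q n i hi
        by_cases hA : ∀ i < n, q i < q n
        · -- new maximum: go above everything, above f n
          set msel : ℕ → ℕ := fun i =>
            if h : i < n then (hf3 (G i) (ih2 i h)).choose else 0 with hmsel
          have hmprop : ∀ i (h : i < n), r (G i) (f (msel i)) := by
            intro i h
            simp only [hmsel, dif_pos h]
            exact (hf3 (G i) (ih2 i h)).choose_spec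
          set B : ℕ := (Finset.range n).sup msel with hB
          refine ⟨f (B + n + 1), ?_, hf2 (B + n), fun _ => hchain n (B + n + 1) (by omega)⟩
          intro i hi
          constructor
          · intro _
            rw [hFG i hi]
            have h1 : msel i ≤ B := Finset.le_sup (Finset.mem_range.mpr hi)
            exact htrans (hmprop i hi) (hchain (msel i) (B + n + 1) (by omega))
          · intro h
            exact absurd (hA i hi) (lt_asymm h)
        · push_neg at hA
          obtain ⟨j0, hj0n, hj0⟩ := hA
          have hqj0 : q n < q j0 :=
            lt_of_le_of_ne hj0 fun h => by
              exact absurd (hqinj h) (by omega)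
          set T : Finset ℕ := (Finset.range n).filter (fun i => q n < q i) with hT
          have hTne : T.Nonempty :=
            ⟨j0, Finset.mem_filter.mpr ⟨Finset.mem_range.mpr hj0n, hqj0⟩⟩
          obtain ⟨j, hjT, hjmin⟩ := T.exists_min_image q hTne
          have hjn : j < n := Finset.mem_range.mp (Finset.mem_filter.mp hjT).1
          have hqnj : q n < q j := (Finset.mem_filter.mp hjT).2
          have hupper : ∀ z, r z (G j) → ∀ k < n, q n < q k → r z (G k) := by
            intro z hz k hk hqk
            have hkT : k ∈ T := Finset.mem_filter.mpr ⟨Finset.mem_range.mpr hk, hqk⟩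
            have hjk : q j ≤ q k := hjmin k hkT
            rcases eq_or_lt_of_le hjk with h | h
            · rwa [hqinj h] at hz
            · exact htrans hz (ih1 j k hjn hk h)
          have hcomp3 : ¬ (∀ i < n, q i < q n) := fun h => absurd (h j hjn) (lt_asymm hqnj)
          by_cases hlo : ∃ i, i < n ∧ q i < q n
          · set Slo : Finset ℕ := (Finset.range n).filter (fun i => q i < q n) with hSlo
            have hSne : Slo.Nonempty := by
              obtain ⟨i, hi, hqi⟩ := hlo
              exact ⟨i, Finset.mem_filter.mpr ⟨Finset.mem_range.mpr hi, hqi⟩⟩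
            obtain ⟨i, hiS, himax⟩ := Slo.exists_max_image q hSne
            have hin : i < n := Finset.mem_range.mp (Finset.mem_filter.mp hiS).1
            have hqin : q i < q n := (Finset.mem_filter.mp hiS).2
            obtain ⟨z, hz1, hz2⟩ := hdense (G i) (G j) (ih1 i j hin hjn (hqin.trans hqnj))
            refine ⟨z, ?_, htrans hz2 (ih2 j hjn), fun h => absurd h hcomp3⟩
            intro k hk
            rw [hFG k hk]
            constructor
            · intro hqk
              have hkS : k ∈ Slo := Finset.mem_filter.mpr ⟨Finset.mem_range.mpr hk, hqk⟩
              have hki : q k ≤ q i := himax k hkS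
              rcases eq_or_lt_of_le hki with h | h
              · rw [hqinj h]; exact hz1
              · exact htrans (ih1 k i hk hin h) hz1
            · exact hupper z hz2 k hk
          · push_neg at hlo
            obtain ⟨z, hz⟩ := hbelow (G j)
            refine ⟨z, ?_, htrans hz (ih2 j hjn), fun h => absurd h hcomp3⟩
            intro k hk
            rw [hFG k hk]
            constructor
            · intro hqk
              exact absurd hqk (not_lt.mpr (hlo k hk))
            · exact hupper z hz k hk
      -- G n is the chosen element
      have hPn : Stmt1Aux.P r a f q (Stmt1Aux.F r a f q n) n (G n) := by
        have hstep : Stmt1Aux.step r a f q (Stmt1Aux.F r a f q n) n = hex.choose :=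
          dif_pos hex
        have : G n = hex.choose := by
          rw [hGdef, Stmt1Aux.G_eq, hstep]
        rw [this]
        exact hex.choose_spec
      obtain ⟨hP1, hP2, hP3⟩ := hPn
      have hFG : ∀ i < n, Stmt1Aux.F r a f q n i = G i := fun i hi =>
        Stmt1Aux.F_eq r a f q n i hi
      refine ⟨?_, ?_, ?_⟩
      · intro i j hi hj hqij
        rcases Nat.lt_succ_iff_lt_or_eq.mp hi with hi' | hi'
        · rcases Nat.lt_succ_iff_lt_or_eq.mp hj with hj' | hj'
          · exact ih1 i j hi' hj' hqij
          · subst hj'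
            have := (hP1 i hi').1 hqij
            rwa [hFG i hi'] at this
        · subst hi'
          rcases Nat.lt_succ_iff_lt_or_eq.mp hj with hj' | hj'
          · have := (hP1 j hj').2 hqij
            rwa [hFG j hj'] at this
          · subst hj'; exact absurd hqij (lt_irrefl _)
      · intro i hi
        rcases Nat.lt_succ_iff_lt_or_eq.mp hi with hi' | hi'
        · exact ih2 i hi'
        · subst hi'; exact hP2
      · intro i hi hmax
        rcases Nat.lt_succ_iff_lt_or_eq.mp hi with hi' | hi'
        · exact ih3 i hi' hmax
        · subst hi'; exact hP3 hmax
  refine ⟨fun p => G (e.symm p), ?_, ?_⟩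
  · intro l m hlm
    have h := (Inv (max (e.symm l) (e.symm m) + 1)).1 (e.symm l) (e.symm m)
      (Nat.lt_succ_of_le (le_max_left _ _)) (Nat.lt_succ_of_le (le_max_right _ _))
    apply h
    simpa [hq] using hlm
  · intro a' ha'
    obtain ⟨m, hm⟩ := hf3 a' ha'
    -- find a "new maximum" stage j ≥ m
    have hBlt : ∀ i ∈ Finset.range (m + 1), q i < 1 := fun i _ => (e i).2.2
    have hBpos : ∀ i ∈ Finset.range (m + 1), 0 < q i := fun i _ => (e i).2.1
    set B : ℚ := (Finset.range (m + 1)).sup' ⟨0, Finset.mem_range.mpr (by omega)⟩ q with hB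
    have hBmem : ∃ i ∈ Finset.range (m + 1), B = q i := by
      obtain ⟨i, hi, hqi⟩ := Finset.exists_mem_eq_sup' (s := Finset.range (m + 1))
        ⟨0, Finset.mem_range.mpr (Nat.succ_pos m)⟩ q
      exact ⟨i, hi, hqi⟩
    have hB1 : B < 1 := by obtain ⟨i, hi, hqi⟩ := hBmem; rw [hqi]; exact hBlt i hi
    have hB0 : 0 < B := by obtain ⟨i, hi, hqi⟩ := hBmem; rw [hqi]; exact hBpos i hi
    set c : ℚ := (B + 1) / 2 with hc
    have hcB : B < c := by rw [hc]; linarith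
    have hc1 : c < 1 := by rw [hc]; linarith
    have hc0 : 0 < c := by rw [hc]; linarith
    set t : ℕ := e.symm ⟨c, hc0, hc1⟩ with ht
    have hqt : q t = c := by simp [hq, ht]
    have hqgt : ∀ i ≤ m, q i < c := by
      intro i hi
      have : q i ≤ B := Finset.le_sup' q (Finset.mem_range.mpr (by omega))
      linarith
    obtain ⟨j, hjmem, hjmax⟩ := (Finset.range (t + 1)).exists_max_image q
      ⟨t, Finset.mem_range.mpr (by omega)⟩
    have hjt : j ≤ t := Nat.lt_succ_iff.mp (Finset.mem_range.mp hjmem)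
    have hjc : c ≤ q j := by
      have := hjmax t (Finset.mem_range.mpr (by omega))
      rwa [hqt] at this
    have hjm : m < j := by
      by_contra h
      push_neg at h
      have := hqgt j h
      linarith
    have hjnewmax : ∀ k < j, q k < q j := by
      intro k hk
      have hkmem : k ∈ Finset.range (t + 1) := Finset.mem_range.mpr (by omega)
      have hle := hjmax k hkmem
      exact lt_of_le_of_ne hle fun h => by
        exact absurd (hqinj h) (by omega)
    have hfj : r (f j) (G j) := (Inv (j + 1)).2.2 j (by omega) hjnewmax
    refine ⟨e j, ?_⟩
    have : r a' (f j) := htrans hm (hchain m j hjm)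
    have hGj : G (e.symm (e j)) = G j := by rw [Equiv.symm_apply_apply]
    show r a' (G (e.symm (e j)))
    rw [hGj]
    exact htrans this hfj
end

section
/- Let S be a Cu-semigroup and let a ∈ S. Then there exists a family (a_λ) indexed by λ ∈ (0,1] with a₁ = a, such that a_{λ'} ≪ a_λ whenever λ' < λ in (0,1], and such that a_λ is the supremum of {a_{λ'} : λ' < λ} for every λ ∈ (0,1]. -/
/-- The sequential way-below (compact containment) relation in a preordered set. -/
def CuWayBelow {S : Type*} [Preorder S] (x y : S) : Prop :=
  ∀ z : ℕ → S, Monotone z → ∀ s : S, IsLUB (Set.range z) s → y ≤ s → ∃ k, x ≤ z k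

/-- An abstract Cuntz semigroup: a positively ordered monoid satisfying (O1)-(O4). -/
class IsCuSgp (S : Type*) [AddCommMonoid S] [PartialOrder S] : Prop where
  zero_le : ∀ a : S, 0 ≤ a
  add_mono : ∀ ⦃a b c d : S⦄, a ≤ b → c ≤ d → a + c ≤ b + d
  O1 : ∀ z : ℕ → S, Monotone z → ∃ s, IsLUB (Set.range z) s
  O2 : ∀ a : S, ∃ z : ℕ → S, (∀ n, CuWayBelow (z n) (z (n + 1))) ∧ IsLUB (Set.range z) a
  O3 : ∀ ⦃a' a b' b : S⦄, CuWayBelow a' a → CuWayBelow b' b → CuWayBelow (a' + b') (a + b)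
  O4 : ∀ z w : ℕ → S, Monotone z → Monotone w → ∀ s t : S, IsLUB (Set.range z) s →
    IsLUB (Set.range w) t → IsLUB (Set.range fun n => z n + w n) (s + t)


section Helpers

variable {S : Type*} [AddCommMonoid S] [PartialOrder S] [IsCuSgp S]

lemma cu_wb_le {x y : S} (h : CuWayBelow x y) : x ≤ y := by
  obtain ⟨k, hk⟩ := h (fun _ => y) monotone_const y (by rw [Set.range_const]; exact isLUB_singleton) le_rfl
  exact hk

lemma cu_wb_mono {x x' y' y : S} (hx : x ≤ x') (h : CuWayBelow x' y') (hy : y' ≤ y) :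
    CuWayBelow x y := fun w hw s hs hle =>
  (h w hw s hs (hy.trans hle)).imp fun _ hk => hx.trans hk

lemma cu_wb_zero (y : S) : CuWayBelow (0 : S) y := fun w _ _ _ _ => ⟨0, IsCuSgp.zero_le _⟩

lemma cu_wb_interpolate {x y : S} (h : CuWayBelow x y) :
    ∃ c, CuWayBelow x c ∧ CuWayBelow c y := by
  obtain ⟨w, hw, hlub⟩ := IsCuSgp.O2 y
  have hmono : Monotone w := monotone_nat_of_le_succ fun n => cu_wb_le (hw n)
  obtain ⟨k, hk⟩ := h w hmono y hlub le_rfl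
  exact ⟨w (k + 1), cu_wb_mono hk (hw k) le_rfl,
    cu_wb_mono le_rfl (hw (k + 1)) (hlub.1 (Set.mem_range_self _))⟩

open Classical in
noncomputable def cuInterp (x y : S) : S :=
  if h : CuWayBelow x y then (cu_wb_interpolate h).choose else y

open Classical in
lemma cuInterp_wb_left {x y : S} (h : CuWayBelow x y) : CuWayBelow x (cuInterp x y) := by
  rw [cuInterp, dif_pos h]; exact (cu_wb_interpolate h).choose_spec.1

open Classical in
lemma cuInterp_wb_right {x y : S} (h : CuWayBelow x y) : CuWayBelow (cuInterp x y) y := by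
  rw [cuInterp, dif_pos h]; exact (cu_wb_interpolate h).choose_spec.2

open Classical in
lemma cuInterp_le (x y : S) : cuInterp x y ≤ y := by
  by_cases h : CuWayBelow x y
  · exact cu_wb_le (cuInterp_wb_right h)
  · rw [cuInterp, dif_neg h]

noncomputable def dChain (z : ℤ → S) : ℕ → ℤ → S
  | 0 => z
  | (n + 1) => fun j =>
      if 2 ∣ j then dChain z n (j / 2)
      else cuInterp (dChain z n ((j - 1) / 2)) (dChain z n ((j - 1) / 2 + 1))

lemma dChain_even (z : ℤ → S) (n : ℕ) (m : ℤ) : dChain z (n + 1) (2 * m) = dChain z n m := by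
  have h : (2 : ℤ) ∣ 2 * m := ⟨m, rfl⟩
  simp [dChain, h, Int.mul_ediv_cancel_left m two_ne_zero]

lemma dChain_odd (z : ℤ → S) (n : ℕ) (m : ℤ) :
    dChain z (n + 1) (2 * m + 1) = cuInterp (dChain z n m) (dChain z n (m + 1)) := by
  have h : ¬ (2 : ℤ) ∣ 2 * m + 1 := by omega
  have h2 : (2 * m + 1 - 1) / 2 = m := by omega
  simp [dChain, h, h2]

lemma dChain_wb (z : ℤ → S) (hz : ∀ j, CuWayBelow (z j) (z (j + 1))) :
    ∀ (n : ℕ) (j : ℤ), CuWayBelow (dChain z n j) (dChain z n (j + 1)) := by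
  intro n
  induction n with
  | zero => exact hz
  | succ n ih =>
    intro j
    rcases Int.even_or_odd j with ⟨m, hm⟩ | ⟨m, hm⟩
    · have hj : j = 2 * m := by omega
      subst hj
      rw [dChain_even, dChain_odd]
      exact cuInterp_wb_left (ih m)
    · subst hm
      have h1 : 2 * m + 1 + 1 = 2 * (m + 1) := by ring
      rw [dChain_odd, h1, dChain_even]
      exact cuInterp_wb_right (ih m)

lemma dChain_mono (z : ℤ → S) (hz : ∀ j, CuWayBelow (z j) (z (j + 1))) (n : ℕ) :
    Monotone (dChain z n) :=
  monotone_int_of_le_succ fun j => cu_wb_le (dChain_wb z hz n j)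

lemma dChain_coh (z : ℤ → S) : ∀ (k n : ℕ) (j : ℤ), dChain z (n + k) (j * 2 ^ k) = dChain z n j := by
  intro k
  induction k with
  | zero => intro n j; simp
  | succ k ih =>
    intro n j
    have h1 : j * 2 ^ (k + 1) = 2 * (j * 2 ^ k) := by ring
    have h2 : n + (k + 1) = (n + k) + 1 := by ring
    rw [h1, h2, dChain_even, ih]

lemma dChain_cross (z : ℤ → S) (hz : ∀ j, CuWayBelow (z j) (z (j + 1)))
    {n m : ℕ} {j j' : ℤ} (h : j * 2 ^ m ≤ j' * 2 ^ n) : dChain z n j ≤ dChain z m j' := by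
  have h1 : dChain z n j = dChain z (n + m) (j * 2 ^ m) := (dChain_coh z m n j).symm
  have h2 : dChain z m j' = dChain z (n + m) (j' * 2 ^ n) := by
    rw [add_comm n m]; exact (dChain_coh z n m j').symm
  rw [h1, h2]
  exact dChain_mono z hz _ h

lemma dChain_bdd (z : ℤ → S) {a : S} (ha : ∀ j, z j ≤ a) :
    ∀ (n : ℕ) (j : ℤ), dChain z n j ≤ a := by
  intro n
  induction n with
  | zero => exact ha
  | succ n ih =>
    intro j
    rcases Int.even_or_odd j with ⟨m, hm⟩ | ⟨m, hm⟩
    · have hj : j = 2 * m := by omega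
      subst hj; rw [dChain_even]; exact ih m
    · subst hm; rw [dChain_odd]; exact (cuInterp_le _ _).trans (ih (m + 1))

open Classical in
noncomputable def mlub (w : ℕ → S) : S :=
  if h : Monotone w then (IsCuSgp.O1 w h).choose else w 0

open Classical in
lemma mlub_isLUB {w : ℕ → S} (h : Monotone w) : IsLUB (Set.range w) (mlub w) := by
  rw [mlub, dif_pos h]; exact (IsCuSgp.O1 w h).choose_spec

lemma exists_param (p m : ℝ) (h0 : 0 < m) (h1 : m ≤ 1) (hp : m < 1 → p < m / (1 - m)) :
    ∃ l : ℝ, 0 < l ∧ l < m ∧ p < l / (1 - l) := by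
  by_cases hm : m < 1
  · set T := m / (1 - m) with hT
    have hm' : 0 < 1 - m := by linarith
    have hT0 : 0 < T := div_pos h0 hm'
    set q := (max p 0 + T) / 2 with hq
    have hmax : max p 0 < T := max_lt (hp hm) hT0
    have hq0 : 0 < q := by
      have : (0 : ℝ) ≤ max p 0 := le_max_right _ _
      simp only [hq]; linarith
    have hqT : q < T := by simp only [hq]; linarith
    have hpq : p < q := by
      have : p ≤ max p 0 := le_max_left _ _
      simp only [hq]; linarith
    refine ⟨q / (1 + q), by positivity, ?_, ?_⟩
    · rw [div_lt_iff₀ (by linarith)]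
      have : q * (1 - m) < m := by
        rw [hT, lt_div_iff₀ hm'] at hqT; linarith
      nlinarith
    · have hE : (q / (1 + q)) / (1 - q / (1 + q)) = q := by
        have h1q : (1 : ℝ) + q ≠ 0 := by positivity
        field_simp
        ring
      rw [hE]; exact hpq
  · have hm1 : m = 1 := le_antisymm h1 (not_lt.1 hm)
    set q := max p 0 + 1 with hq
    have hq0 : 0 < q := by
      have : (0 : ℝ) ≤ max p 0 := le_max_right _ _
      simp only [hq]; linarith
    have hpq : p < q := by
      have : p ≤ max p 0 := le_max_left _ _
      simp only [hq]; linarith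
    refine ⟨q / (1 + q), by positivity, ?_, ?_⟩
    · rw [hm1, div_lt_iff₀ (by linarith)]; linarith
    · have hE : (q / (1 + q)) / (1 - q / (1 + q)) = q := by
        have h1q : (1 : ℝ) + q ≠ 0 := by positivity
        field_simp
        ring
      rw [hE]; exact hpq

end Helpers


noncomputable def cuT (l : {x : ℝ // 0 < x ∧ x ≤ 1}) : ℝ := l.1 / (1 - l.1)

noncomputable def cuC (n : ℕ) (l : {x : ℝ // 0 < x ∧ x ≤ 1}) : ℤ :=
  ⌈(2 : ℝ) ^ n * cuT l⌉ - 1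

lemma cuC_lt (n : ℕ) (l : {x : ℝ // 0 < x ∧ x ≤ 1}) :
    ((cuC n l : ℤ) : ℝ) < 2 ^ n * cuT l := by
  have h := Int.ceil_lt_add_one ((2 : ℝ) ^ n * cuT l)
  rw [cuC]; push_cast; linarith

lemma cuC_ge (n : ℕ) (l : {x : ℝ // 0 < x ∧ x ≤ 1}) :
    (2 : ℝ) ^ n * cuT l - 1 ≤ ((cuC n l : ℤ) : ℝ) := by
  have h := Int.le_ceil ((2 : ℝ) ^ n * cuT l)
  rw [cuC]; push_cast; linarith

section Main

variable {S : Type*} [AddCommMonoid S] [PartialOrder S] [IsCuSgp S]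

noncomputable def cuSeq (z : ℤ → S) (l : {x : ℝ // 0 < x ∧ x ≤ 1}) (n : ℕ) : S :=
  dChain z n (cuC n l)

open Classical in
noncomputable def cuG (z : ℤ → S) (a : S) (l : {x : ℝ // 0 < x ∧ x ≤ 1}) : S :=
  if l.1 = 1 then a else mlub (cuSeq z l)

lemma cuG_one (z : ℤ → S) (a : S) (l : {x : ℝ // 0 < x ∧ x ≤ 1}) (h : l.1 = 1) :
    cuG z a l = a := by rw [cuG, if_pos h]

lemma cuG_lt (z : ℤ → S) (a : S) (l : {x : ℝ // 0 < x ∧ x ≤ 1}) (h : l.1 ≠ 1) :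
    cuG z a l = mlub (cuSeq z l) := by rw [cuG, if_neg h]

lemma cuSeq_mono (z : ℤ → S) (hz : ∀ j, CuWayBelow (z j) (z (j + 1)))
    (l : {x : ℝ // 0 < x ∧ x ≤ 1}) : Monotone (cuSeq z l) := by
  apply monotone_nat_of_le_succ
  intro n
  apply dChain_cross z hz
  have h1 := cuC_lt n l
  have h2 := cuC_ge (n + 1) l
  have h1' : 2 * ((cuC n l : ℤ) : ℝ) < (2 : ℝ) ^ (n + 1) * cuT l := by
    have he : (2 : ℝ) ^ (n + 1) * cuT l = 2 * ((2 : ℝ) ^ n * cuT l) := by ring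
    rw [he]; linarith
  have key : 2 * cuC n l ≤ cuC (n + 1) l := by
    have h5 : (2 * cuC n l : ℤ) < cuC (n + 1) l + 1 := by
      have : ((2 * cuC n l : ℤ) : ℝ) < ((cuC (n + 1) l + 1 : ℤ) : ℝ) := by
        push_cast; linarith
      exact_mod_cast this
    omega
  have h2n : (0 : ℤ) < 2 ^ n := by positivity
  calc cuC n l * 2 ^ (n + 1) = (2 * cuC n l) * 2 ^ n := by ring
  _ ≤ cuC (n + 1) l * 2 ^ n := mul_le_mul_of_nonneg_right key h2n.le

lemma cu_lemA (z : ℤ → S) (hz : ∀ j, CuWayBelow (z j) (z (j + 1))) (a : S)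
    (l : {x : ℝ // 0 < x ∧ x ≤ 1}) (hl : l.1 < 1) (n : ℕ) (j : ℤ)
    (hj : (j : ℝ) / 2 ^ n < cuT l) : dChain z n j ≤ cuG z a l := by
  rw [cuG_lt z a l (ne_of_lt hl)]
  set δ : ℝ := cuT l - (j : ℝ) / 2 ^ n with hδdef
  have hδ : 0 < δ := by simp only [hδdef]; linarith
  obtain ⟨n', hn'⟩ := pow_unbounded_of_one_lt (R := ℝ) (1 / δ) one_lt_two
  have hδ2 : 1 ≤ δ * 2 ^ n' := by
    rw [div_lt_iff₀ hδ] at hn'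
    nlinarith
  have h2n : (0 : ℝ) < 2 ^ n := by positivity
  have hTe : cuT l * 2 ^ n = (j : ℝ) + δ * 2 ^ n := by
    simp only [hδdef]; field_simp; ring
  have key : j * 2 ^ n' ≤ cuC n' l * 2 ^ n := by
    have hc := cuC_ge n' l
    have hr : ((j * 2 ^ n' : ℤ) : ℝ) ≤ ((cuC n' l * 2 ^ n : ℤ) : ℝ) := by
      push_cast
      nlinarith [mul_le_mul_of_nonneg_right hc h2n.le,
        mul_le_mul_of_nonneg_right hδ2 h2n.le]
    exact_mod_cast hr
  calc dChain z n j ≤ dChain z n' (cuC n' l) := dChain_cross z hz key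
  _ ≤ mlub (cuSeq z l) := (mlub_isLUB (cuSeq_mono z hz l)).1 ⟨n', rfl⟩

lemma cu_lemB (z : ℤ → S) (hz : ∀ j, CuWayBelow (z j) (z (j + 1))) (a : S)
    (l : {x : ℝ // 0 < x ∧ x ≤ 1}) (hl : l.1 ≠ 1) (n : ℕ) (j : ℤ)
    (hj : cuT l ≤ (j : ℝ) / 2 ^ n) : cuG z a l ≤ dChain z n j := by
  rw [cuG_lt z a l hl]
  apply (mlub_isLUB (cuSeq_mono z hz l)).2
  rintro x ⟨k, rfl⟩
  apply dChain_cross z hz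
  have h1 := cuC_lt k l
  have h2n : (0 : ℝ) < 2 ^ n := by positivity
  have h2k : (0 : ℝ) < 2 ^ k := by positivity
  have hje : ((j : ℝ) / 2 ^ n) * 2 ^ n = (j : ℝ) := div_mul_cancel₀ _ (ne_of_gt h2n)
  have hr : ((cuC k l * 2 ^ n : ℤ) : ℝ) < ((j * 2 ^ k : ℤ) : ℝ) := by
    push_cast
    nlinarith [mul_lt_mul_of_pos_right h1 h2n,
      mul_le_mul_of_nonneg_right (mul_le_mul_of_nonneg_left hj h2k.le) h2n.le, hje]
  have : (cuC k l * 2 ^ n : ℤ) < j * 2 ^ k := by exact_mod_cast hr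
  exact this.le

end Main


/-- In a Cu-semigroup, every element `a` is the endpoint of a `(0,1]`-indexed chain
which is way-below increasing and continuous (each member is the supremum of the
earlier ones). -/
theorem stmt3 {S : Type*} [AddCommMonoid S] [PartialOrder S] [IsCuSgp S] (a : S) :
    ∃ g : {x : ℝ // 0 < x ∧ x ≤ 1} → S,
      g ⟨1, by norm_num⟩ = a ∧
      (∀ l m : {x : ℝ // 0 < x ∧ x ≤ 1}, l.1 < m.1 → CuWayBelow (g l) (g m)) ∧
      (∀ m : {x : ℝ // 0 < x ∧ x ≤ 1}, IsLUB (g '' {l | l.1 < m.1}) (g m)) := by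
  classical
  obtain ⟨z0, hz0, hz0lub⟩ := IsCuSgp.O2 a
  set z : ℤ → S := fun j => if 0 ≤ j then z0 j.toNat else 0 with hzdef
  have hz : ∀ j, CuWayBelow (z j) (z (j + 1)) := by
    intro j
    by_cases hj : 0 ≤ j
    · have e1 : z j = z0 j.toNat := by simp only [hzdef]; rw [if_pos hj]
      have e2 : z (j + 1) = z0 (j.toNat + 1) := by
        simp only [hzdef]; rw [if_pos (by omega : (0 : ℤ) ≤ j + 1)]
        congr 1; omega
      rw [e1, e2]; exact hz0 _
    · have e1 : z j = 0 := by simp only [hzdef]; rw [if_neg hj]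
      rw [e1]; exact cu_wb_zero _
  have hzle : ∀ j, z j ≤ a := by
    intro j
    by_cases hj : 0 ≤ j
    · simp only [hzdef]; rw [if_pos hj]; exact hz0lub.1 ⟨_, rfl⟩
    · simp only [hzdef]; rw [if_neg hj]; exact IsCuSgp.zero_le a
  have key2 : ∀ l m : {x : ℝ // 0 < x ∧ x ≤ 1}, l.1 < m.1 →
      CuWayBelow (cuG z a l) (cuG z a m) := by
    intro l m hlm
    have hl1 : l.1 < 1 := lt_of_lt_of_le hlm m.2.2
    by_cases hm1 : m.1 = 1
    · rw [cuG_one z a m hm1]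
      refine cu_wb_mono (cu_lemB z hz a l (ne_of_lt hl1) 0 ⌈cuT l⌉ ?_)
        (dChain_wb z hz 0 _) (dChain_bdd z hzle 0 _)
      simpa using Int.le_ceil (cuT l)
    · have hm1' : m.1 < 1 := lt_of_le_of_ne m.2.2 hm1
      have hT : cuT l < cuT m := by
        rw [cuT, cuT, div_lt_div_iff₀ (by linarith) (by linarith)]
        nlinarith [l.2.1, m.2.1, hlm]
      obtain ⟨n0, hn0⟩ := pow_unbounded_of_one_lt (R := ℝ) (3 / (cuT m - cuT l)) one_lt_two
      have hTd : (0 : ℝ) < cuT m - cuT l := by linarith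
      have h3 : 3 < (cuT m - cuT l) * 2 ^ n0 := by
        rw [div_lt_iff₀ hTd] at hn0; linarith
      set j : ℤ := ⌈(2 : ℝ) ^ n0 * cuT l⌉ with hjdef
      have hB : cuG z a l ≤ dChain z n0 j := by
        refine cu_lemB z hz a l (ne_of_lt hl1) n0 j ?_
        rw [le_div_iff₀ (by positivity)]
        calc cuT l * 2 ^ n0 = 2 ^ n0 * cuT l := by ring
        _ ≤ (j : ℝ) := Int.le_ceil _
      have hA : dChain z n0 (j + 1) ≤ cuG z a m := by
        refine cu_lemA z hz a m hm1' n0 (j + 1) ?_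
        rw [div_lt_iff₀ (by positivity)]
        have hc := Int.ceil_lt_add_one ((2 : ℝ) ^ n0 * cuT l)
        rw [← hjdef] at hc
        push_cast
        nlinarith [hc, h3]
      exact cu_wb_mono hB (dChain_wb z hz n0 j) hA
  refine ⟨cuG z a, cuG_one z a _ rfl, key2, ?_⟩
  intro m
  by_cases hm1 : m.1 = 1
  · constructor
    · rintro x ⟨l, hl, rfl⟩
      have hl1 : l.1 < 1 := by have h := hl; simp only [Set.mem_setOf_eq] at h; rwa [hm1] at h
      rw [cuG_one z a m hm1, cuG_lt z a l (ne_of_lt hl1)]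
      apply (mlub_isLUB (cuSeq_mono z hz l)).2
      rintro x ⟨k, rfl⟩
      exact dChain_bdd z hzle k _
    · intro u hu
      rw [cuG_one z a m hm1]
      apply hz0lub.2
      rintro x ⟨k, rfl⟩
      obtain ⟨l, hl0, hlm, hlT⟩ := exists_param (k : ℝ) m.1 m.2.1 m.2.2
        (fun h => absurd h (by rw [hm1]; exact lt_irrefl 1))
      have hl1 : l < 1 := by rwa [hm1] at hlm
      set l' : {x : ℝ // 0 < x ∧ x ≤ 1} := ⟨l, hl0, le_of_lt hl1⟩ with hl'def
      have hd0 : z0 k = dChain z 0 (k : ℤ) := by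
        show z0 k = z (k : ℤ)
        simp only [hzdef]
        rw [if_pos (Int.natCast_nonneg k)]
        simp
      have hk : ((k : ℤ) : ℝ) / 2 ^ 0 < cuT l' := by
        rw [show cuT l' = l / (1 - l) from rfl]
        simpa using hlT
      calc z0 k = dChain z 0 (k : ℤ) := hd0
      _ ≤ cuG z a l' := cu_lemA z hz a l' hl1 0 (k : ℤ) hk
      _ ≤ u := hu ⟨l', hlm, rfl⟩
  · have hm1' : m.1 < 1 := lt_of_le_of_ne m.2.2 hm1
    constructor
    · rintro x ⟨l, hl, rfl⟩
      exact cu_wb_le (key2 l m hl)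
    · intro u hu
      rw [cuG_lt z a m hm1]
      apply (mlub_isLUB (cuSeq_mono z hz m)).2
      rintro x ⟨n, rfl⟩
      have hp : ((cuC n m : ℤ) : ℝ) / 2 ^ n < cuT m := by
        rw [div_lt_iff₀ (by positivity)]
        nlinarith [cuC_lt n m]
      obtain ⟨l, hl0, hlm, hlT⟩ := exists_param (((cuC n m : ℤ) : ℝ) / 2 ^ n) m.1 m.2.1 m.2.2
        (fun _ => by rw [show m.1 / (1 - m.1) = cuT m from rfl]; exact hp)
      have hl1 : l < 1 := lt_trans hlm hm1'
      set l' : {x : ℝ // 0 < x ∧ x ≤ 1} := ⟨l, hl0, le_of_lt hl1⟩ with hl'def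
      have hk : ((cuC n m : ℤ) : ℝ) / 2 ^ n < cuT l' := by
        rw [show cuT l' = l / (1 - l) from rfl]; exact hlT
      calc cuSeq z m n = dChain z n (cuC n m) := rfl
      _ ≤ cuG z a l' := cu_lemA z hz a l' hl1 n _ hk
      _ ≤ u := hu ⟨l', hlm, rfl⟩
end

section
/- Let S and T be Cu-semigroups, let φ : S → T be a generalized Cu-morphism (a monoid map preserving order, zero, and suprema of increasing sequences), and let a ∈ S be soft. Then φ(a) is soft in T. -/
/-- Generalized Cu-morphism: preserves addition, order, zero and suprema of
increasing sequences. -/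
def IsGenCuMor {S T : Type*} [AddCommMonoid S] [PartialOrder S] [AddCommMonoid T]
    [PartialOrder T] (φ : S → T) : Prop :=
  φ 0 = 0 ∧ (∀ a b : S, φ (a + b) = φ a + φ b) ∧ Monotone φ ∧
    ∀ z : ℕ → S, Monotone z → ∀ s : S, IsLUB (Set.range z) s →
      IsLUB (Set.range (φ ∘ z)) (φ s)

/-- An element `a` is soft if every `a' ≪ a` satisfies `(k+1)·a' ≤ k·a` for some `k`. -/
def IsSoft {S : Type*} [AddCommMonoid S] [PartialOrder S] (a : S) : Prop :=
  ∀ a' : S, CuWayBelow a' a → ∃ k : ℕ, (k + 1) • a' ≤ k • a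

lemma CuWayBelow.le {S : Type*} [Preorder S] {x y : S} (h : CuWayBelow x y) : x ≤ y := by
  obtain ⟨k, hk⟩ := h (fun _ => y) monotone_const y
    ⟨fun t ht => by obtain ⟨n, rfl⟩ := ht; exact le_rfl, fun t ht => ht ⟨0, rfl⟩⟩ le_rfl
  exact hk

lemma CuWayBelow.trans_le {S : Type*} [Preorder S] {x y y' : S} (h : CuWayBelow x y)
    (h' : y ≤ y') : CuWayBelow x y' := fun z hz s hs hle => h z hz s hs (h'.trans hle)

lemma smul_mono_cu {S : Type*} [AddCommMonoid S] [PartialOrder S] [IsCuSgp S]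
    {x y : S} (h : x ≤ y) (n : ℕ) : n • x ≤ n • y := by
  induction n with
  | zero => simp
  | succ n ih => rw [succ_nsmul, succ_nsmul]; exact IsCuSgp.add_mono ih h

lemma map_nsmul_cu {S T : Type*} [AddCommMonoid S] [PartialOrder S] [AddCommMonoid T]
    [PartialOrder T] (φ : S → T) (hφ : IsGenCuMor φ) (n : ℕ) (x : S) :
    φ (n • x) = n • φ x := by
  induction n with
  | zero => simpa using hφ.1
  | succ n ih => rw [succ_nsmul, succ_nsmul, hφ.2.1, ih]

/-- A generalized Cu-morphism between Cu-semigroups maps soft elements to soft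
elements. -/
theorem stmt4 {S T : Type*} [AddCommMonoid S] [PartialOrder S] [AddCommMonoid T]
    [PartialOrder T] [IsCuSgp S] [IsCuSgp T] (φ : S → T) (hφ : IsGenCuMor φ)
    (a : S) (ha : IsSoft a) : IsSoft (φ a) := by
  intro b' hb'
  obtain ⟨z, hz, hsup⟩ := IsCuSgp.O2 a
  have hmono : Monotone z := monotone_nat_of_le_succ fun n => (hz n).le
  have hsup' := hφ.2.2.2 z hmono a hsup
  obtain ⟨k, hk⟩ := hb' (φ ∘ z) (hφ.2.2.1.comp hmono) (φ a) hsup' le_rfl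
  have hzka : CuWayBelow (z k) a :=
    (hz k).trans_le ((hsup.1 ⟨k + 1, rfl⟩))
  obtain ⟨n, hn⟩ := ha (z k) hzka
  refine ⟨n, ?_⟩
  calc (n + 1) • b' ≤ (n + 1) • φ (z k) := smul_mono_cu hk _
    _ = φ ((n + 1) • z k) := (map_nsmul_cu φ hφ _ _).symm
    _ ≤ φ (n • a) := hφ.2.2.1 hn
    _ = n • φ a := map_nsmul_cu φ hφ _ _
end

section
/- Let S be a P-semigroup with paths indexed by (0,1) ∩ ℚ. Let f be a path and ε ∈ (0,1) ∩ ℚ, and define the ε-cut-down f_ε by f_ε(λ) = f(λ − ε) if λ > ε and f_ε(λ) = 0 otherwise. Then f_ε is again a path, and in the quotient monoid τ(S) = P(S)/∼ the class [f_ε] is way-below the class [f_{ε'}] whenever ε' < ε; moreover [f] is the supremum of the increasing family ([f_ε])_{ε}. -/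
/-- The rationals in the open interval `(0,1)`, used as index set for paths. -/
abbrev Iq : Type := {q : ℚ // 0 < q ∧ q < 1}

lemma Iq.exists_gt (l : Iq) : ∃ m : Iq, l.1 < m.1 := by
  obtain ⟨h0, h1⟩ := l.2
  exact ⟨⟨(l.1 + 1) / 2, by constructor <;> linarith⟩, by show l.1 < (l.1 + 1) / 2; linarith⟩

/-- A `P`-semigroup: a commutative monoid with an additive transitive relation. -/
structure PSgp (M : Type*) [AddCommMonoid M] where
  prec : M → M → Prop
  trans : ∀ ⦃a b c : M⦄, prec a b → prec b c → prec a c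
  zero_prec : ∀ a : M, prec 0 a
  add_prec : ∀ ⦃a b c d : M⦄, prec a b → prec c d → prec (a + c) (b + d)

namespace PSgp

variable {M : Type*} [AddCommMonoid M]

/-- A path in a `P`-semigroup, indexed by the rationals in `(0,1)`. -/
def IsPath (P : PSgp M) (f : Iq → M) : Prop :=
  ∀ ⦃l m : Iq⦄, l.1 < m.1 → P.prec (f l) (f m)

/-- The type of paths in a `P`-semigroup. -/
def Path (P : PSgp M) : Type _ := {f : Iq → M // P.IsPath f}

variable {P : PSgp M}

instance : Add P.Path :=
  ⟨fun f g => ⟨fun l => f.1 l + g.1 l, fun _ _ h => P.add_prec (f.2 h) (g.2 h)⟩⟩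

instance : Zero P.Path := ⟨⟨fun _ => 0, fun _ _ _ => P.zero_prec 0⟩⟩

lemma path_add_apply (f g : P.Path) (l : Iq) : (f + g).1 l = f.1 l + g.1 l := rfl

/-- The pre-order relation between paths. -/
def pLe (f g : P.Path) : Prop := ∀ l : Iq, ∃ m : Iq, P.prec (f.1 l) (g.1 m)

lemma pLe_refl (f : P.Path) : pLe f f := fun l => by
  obtain ⟨m, hm⟩ := Iq.exists_gt l
  exact ⟨m, f.2 hm⟩

lemma pLe_trans {f g h : P.Path} (h1 : pLe f g) (h2 : pLe g h) : pLe f h := fun l => by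
  obtain ⟨m, hm⟩ := h1 l
  obtain ⟨m', hm'⟩ := h2 m
  exact ⟨m', P.trans hm hm'⟩

lemma pLe_add {f g f' g' : P.Path} (h1 : pLe f f') (h2 : pLe g g') : pLe (f + g) (f' + g') := by
  intro l
  obtain ⟨m1, hm1⟩ := h1 l
  obtain ⟨m2, hm2⟩ := h2 l
  have hmem : 0 < max m1.1 m2.1 ∧ max m1.1 m2.1 < 1 :=
    ⟨lt_max_of_lt_left m1.2.1, max_lt m1.2.2 m2.2.2⟩
  obtain ⟨μ, hμ⟩ := Iq.exists_gt ⟨max m1.1 m2.1, hmem⟩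
  have e1 : m1.1 < μ.1 := lt_of_le_of_lt (le_max_left _ _) hμ
  have e2 : m2.1 < μ.1 := lt_of_le_of_lt (le_max_right _ _) hμ
  exact ⟨μ, P.add_prec (P.trans hm1 (f'.2 e1)) (P.trans hm2 (g'.2 e2))⟩

instance pathSetoid (P : PSgp M) : Setoid P.Path where
  r f g := pLe f g ∧ pLe g f
  iseqv := ⟨fun f => ⟨pLe_refl f, pLe_refl f⟩, fun h => ⟨h.2, h.1⟩,
    fun h1 h2 => ⟨pLe_trans h1.1 h2.1, pLe_trans h2.2 h1.2⟩⟩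

/-- The path construction `τ(S)`: equivalence classes of paths. -/
abbrev Tau (P : PSgp M) : Type _ := Quotient (pathSetoid P)

def addT : Tau P → Tau P → Tau P :=
  Quotient.map₂ (· + ·) fun _ _ hf _ _ hg => ⟨pLe_add hf.1 hg.1, pLe_add hf.2 hg.2⟩

lemma addT_mk (f g : P.Path) : addT ⟦f⟧ ⟦g⟧ = ⟦f + g⟧ := rfl

lemma path_add_assoc (f g h : P.Path) : f + g + h = f + (g + h) :=
  Subtype.ext (funext fun _ => add_assoc _ _ _)

lemma path_add_comm (f g : P.Path) : f + g = g + f :=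
  Subtype.ext (funext fun _ => add_comm _ _)

lemma path_zero_add (f : P.Path) : 0 + f = f :=
  Subtype.ext (funext fun _ => zero_add _)

lemma path_add_zero (f : P.Path) : f + 0 = f :=
  Subtype.ext (funext fun _ => add_zero _)

instance : Zero (Tau P) := ⟨⟦(0 : P.Path)⟧⟩
instance : Add (Tau P) := ⟨addT⟩

instance : AddCommMonoid (Tau P) where
  add := addT
  zero := ⟦(0 : P.Path)⟧
  add_assoc a b c := Quotient.inductionOn₃ a b c fun f g h => by
    show addT (addT ⟦f⟧ ⟦g⟧) ⟦h⟧ = addT ⟦f⟧ (addT ⟦g⟧ ⟦h⟧)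
    rw [addT_mk, addT_mk, addT_mk, addT_mk, path_add_assoc]
  zero_add a := Quotient.inductionOn a fun f => by
    show addT ⟦(0 : P.Path)⟧ ⟦f⟧ = ⟦f⟧
    rw [addT_mk, path_zero_add]
  add_zero a := Quotient.inductionOn a fun f => by
    show addT ⟦f⟧ ⟦(0 : P.Path)⟧ = ⟦f⟧
    rw [addT_mk, path_add_zero]
  add_comm a b := Quotient.inductionOn₂ a b fun f g => by
    show addT ⟦f⟧ ⟦g⟧ = addT ⟦g⟧ ⟦f⟧
    rw [addT_mk, addT_mk, path_add_comm]
  nsmul := nsmulRec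
  nsmul_zero := fun _ => rfl
  nsmul_succ := fun _ _ => rfl

def leT : Tau P → Tau P → Prop :=
  Quotient.lift₂ pLe fun _ _ _ _ hf hg => propext
    ⟨fun h => pLe_trans hf.2 (pLe_trans h hg.1), fun h => pLe_trans hf.1 (pLe_trans h hg.2)⟩

instance : PartialOrder (Tau P) where
  le := leT
  le_refl a := Quotient.inductionOn a pLe_refl
  le_trans a b c := Quotient.inductionOn₃ a b c fun _ _ _ h1 h2 => pLe_trans h1 h2
  le_antisymm a b := Quotient.inductionOn₂ a b fun _ _ h1 h2 => Quotient.sound ⟨h1, h2⟩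

lemma leT_mk (f g : P.Path) : (⟦f⟧ : Tau P) ≤ ⟦g⟧ ↔ pLe f g := Iff.rfl

end PSgp


namespace PSgp

variable {M : Type*} [AddCommMonoid M]

/-- The `ε`-cut-down of a function `f : (0,1) ∩ ℚ → M`. -/
def cutdown (P : PSgp M) (f : Iq → M) (e : Iq) : Iq → M := fun l =>
  if h : e.1 < l.1 then
    f ⟨l.1 - e.1, ⟨sub_pos.mpr h, by linarith [l.2.2, e.2.1]⟩⟩
  else 0

lemma cutdown_isPath (P : PSgp M) {f : Iq → M} (hf : P.IsPath f) (e : Iq) :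
    P.IsPath (P.cutdown f e) := by
  intro l m hlm
  unfold cutdown
  split_ifs with h1 h2 h2
  · exact hf (by show l.1 - e.1 < m.1 - e.1; linarith)
  · exact absurd (lt_trans h1 hlm) h2
  · exact P.zero_prec _
  · exact P.zero_prec _

/-- The `ε`-cut-down of a path, as a path. -/
def cutPath (P : PSgp M) (f : P.Path) (e : Iq) : P.Path :=
  ⟨P.cutdown f.1 e, P.cutdown_isPath f.2 e⟩

end PSgp

namespace PSgp

section Diag

/-- Endpoints of the interval decomposition of `(0,1)`. -/
def lam (n : ℕ) : ℚ := 1 - 1 / (n + 1)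

lemma lam_nonneg (n : ℕ) : 0 ≤ lam n := by
  unfold lam
  have h1 : (0:ℚ) < n + 1 := by positivity
  have : 1 / ((n:ℚ) + 1) ≤ 1 := by
    rw [div_le_one h1]; push_cast; linarith [Nat.cast_nonneg (α := ℚ) n]
  linarith

lemma lam_lt_one (n : ℕ) : lam n < 1 := by
  unfold lam
  have h1 : (0:ℚ) < n + 1 := by positivity
  have : 0 < 1 / ((n:ℚ) + 1) := by positivity
  linarith

lemma lam_lt {n m : ℕ} (h : n < m) : lam n < lam m := by
  unfold lam
  have h1 : (0:ℚ) < n + 1 := by positivity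
  have h2 : (0:ℚ) < m + 1 := by positivity
  have hc : (n:ℚ) + 1 < (m:ℚ) + 1 := by exact_mod_cast by omega
  have : 1 / ((m:ℚ) + 1) < 1 / ((n:ℚ) + 1) := by
    apply one_div_lt_one_div_of_lt h1 hc
  linarith

lemma lam_mono {n m : ℕ} (h : n ≤ m) : lam n ≤ lam m := by
  rcases h.lt_or_eq with h | h
  · exact (lam_lt h).le
  · rw [h]

lemma lam_pos {n : ℕ} (h : 0 < n) : 0 < lam n := by
  calc (0:ℚ) = lam 0 := by unfold lam; norm_num
  _ < lam n := lam_lt h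

/-- Interval index of a point of `(0,1)`. -/
def idx (l : Iq) : ℕ := (⌊(1 - l.1)⁻¹⌋).toNat - 1

lemma idx_spec (l : Iq) : lam (idx l) ≤ l.1 ∧ l.1 < lam (idx l + 1) := by
  obtain ⟨h0, h1⟩ := l.2
  set q : ℚ := (1 - l.1)⁻¹ with hq
  have hsub : 0 < 1 - l.1 := by linarith
  have hq1 : 1 ≤ q := by
    rw [hq, le_inv_comm₀ one_pos hsub]; linarith
  have hfl1 : 1 ≤ ⌊q⌋ := by exact_mod_cast Int.le_floor.mpr (by exact_mod_cast hq1)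
  have hcast : ((⌊q⌋.toNat : ℤ) : ℚ) = (⌊q⌋ : ℚ) := by
    norm_cast; omega
  have hidx : (idx l : ℚ) + 1 = (⌊q⌋ : ℚ) := by
    unfold idx
    rw [← hq]
    have h2 : (1:ℕ) ≤ ⌊q⌋.toNat := by omega
    push_cast [h2]
    have hc2 : ((⌊q⌋.toNat : ℕ) : ℚ) = (⌊q⌋ : ℚ) := by exact_mod_cast hcast
    rw [hc2]; ring
  constructor
  · unfold lam
    have hle : ((idx l : ℚ) + 1) ≤ q := by rw [hidx]; exact Int.floor_le q
    have hpos : (0:ℚ) < (idx l : ℚ) + 1 := by positivity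
    rw [sub_le_comm, le_div_iff₀ hpos]
    calc (1 - l.1) * ((idx l : ℚ) + 1) ≤ (1 - l.1) * q := by
          apply mul_le_mul_of_nonneg_left hle hsub.le
      _ = 1 := by rw [hq]; field_simp
  · unfold lam
    have hlt : q < (idx l : ℚ) + 1 + 1 := by
      rw [hidx]; exact_mod_cast Int.lt_floor_add_one q
    have hpos : (0:ℚ) < (idx l : ℚ) + 1 + 1 := by positivity
    have key : 1 < (1 - l.1) * ((idx l : ℚ) + 1 + 1) := by
      calc 1 = (1 - l.1) * q := by rw [hq]; field_simp
      _ < (1 - l.1) * ((idx l : ℚ) + 1 + 1) := by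
          apply mul_lt_mul_of_pos_left hlt hsub
    have : 1 / ((idx l : ℚ) + 1 + 1) < 1 - l.1 := by
      rw [div_lt_iff₀ hpos]; linarith
    push_cast
    linarith

lemma idx_eq {l : Iq} {j : ℕ} (h1 : lam j ≤ l.1) (h2 : l.1 < lam (j + 1)) : idx l = j := by
  obtain ⟨s1, s2⟩ := idx_spec l
  by_contra hne
  rcases Nat.lt_or_ge (idx l) j with h | h
  · have : lam (idx l + 1) ≤ lam j := lam_mono (by omega)
    linarith
  · have : lam (j + 1) ≤ lam (idx l) := lam_mono (by omega)
    linarith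

lemma idx_mono {l m : Iq} (h : l.1 ≤ m.1) : idx l ≤ idx m := by
  by_contra hc
  push_neg at hc
  obtain ⟨s1, _⟩ := idx_spec l
  obtain ⟨_, s2⟩ := idx_spec m
  have : lam (idx m + 1) ≤ lam (idx l) := lam_mono (by omega)
  linarith

end Diag

end PSgp
namespace PSgp

section Diag2

variable {M : Type*} [AddCommMonoid M] {P : PSgp M}

lemma pLe_of_le {g : ℕ → P.Path} (hg : ∀ k, pLe (g k) (g (k + 1))) :
    ∀ {k m : ℕ}, k ≤ m → pLe (g k) (g m) := by
  intro k m hkm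
  induction m, hkm using Nat.le_induction with
  | base => exact pLe_refl _
  | succ n hn ih => exact pLe_trans ih (hg n)

/-- Midpoint between `μ` and `1`. -/
def mup (μ : Iq) : Iq := ⟨(μ.1 + 1) / 2, by obtain ⟨a, b⟩ := μ.2; constructor <;> linarith⟩

lemma lt_mup (μ : Iq) : μ.1 < (mup μ).1 := by
  obtain ⟨a, b⟩ := μ.2; show μ.1 < (μ.1 + 1) / 2; linarith

lemma mup_lt_one (μ : Iq) : (mup μ).1 < 1 := (mup μ).2.2

/-- Midpoint between `max a b` and `1`. -/
def half1 (a b : Iq) : Iq :=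
  ⟨(max a.1 b.1 + 1) / 2, by
    have h1 : 0 < max a.1 b.1 := lt_max_of_lt_left a.2.1
    have h2 : max a.1 b.1 < 1 := max_lt a.2.2 b.2.2
    constructor <;> linarith⟩

lemma lt_half1_left (a b : Iq) : a.1 < (half1 a b).1 := by
  have h2 : max a.1 b.1 < 1 := max_lt a.2.2 b.2.2
  have := le_max_left a.1 b.1
  show a.1 < (max a.1 b.1 + 1) / 2
  linarith

lemma lt_half1_right (a b : Iq) : b.1 < (half1 a b).1 := by
  have h2 : max a.1 b.1 < 1 := max_lt a.2.2 b.2.2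
  have := le_max_right a.1 b.1
  show b.1 < (max a.1 b.1 + 1) / 2
  linarith

variable (g : ℕ → P.Path) (hGle : ∀ n, pLe (g n) (g (n + 1))) (kf : ℕ → ℕ) (lf : ℕ → Iq)

/-- The recursively chosen base points of the diagonal path. -/
noncomputable def mu : ℕ → Iq
  | 0 => ⟨1 / 2, by norm_num⟩
  | n + 1 =>
    half1 (hGle n (mup (mu n))).choose
      (if h : kf (n + 1) ≤ n + 1 then (pLe_of_le hGle h (lf (n + 1))).choose
       else (hGle n (mup (mu n))).choose)

lemma mu_spec₁ (n : ℕ) :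
    ∃ ν : Iq, P.prec ((g n).1 (mup (mu g hGle kf lf n))) ((g (n + 1)).1 ν) ∧
      ν.1 < (mu g hGle kf lf (n + 1)).1 := by
  refine ⟨(hGle n (mup (mu g hGle kf lf n))).choose,
    (hGle n (mup (mu g hGle kf lf n))).choose_spec, ?_⟩
  rw [mu]
  exact lt_half1_left _ _

lemma mu_spec₂ (n : ℕ) (hk : kf (n + 1) ≤ n + 1) :
    ∃ x : Iq, P.prec ((g (kf (n + 1))).1 (lf (n + 1))) ((g (n + 1)).1 x) ∧
      x.1 < (mu g hGle kf lf (n + 1)).1 := by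
  refine ⟨(pLe_of_le hGle hk (lf (n + 1))).choose,
    (pLe_of_le hGle hk (lf (n + 1))).choose_spec, ?_⟩
  conv_rhs => rw [mu, dif_pos hk]
  exact lt_half1_right _ _

/-- The affine reparametrisation used within one interval. -/
def theta (μ a l : ℚ) : ℚ := μ + (l - a) * (1 - μ) / 2

lemma theta_lb {μ a l : ℚ} (hμ1 : μ < 1) (hal : a ≤ l) : μ ≤ theta μ a l := by
  unfold theta; nlinarith

lemma theta_ub {μ a l : ℚ} (hμ1 : μ < 1) (ha : 0 ≤ a) (hl : l < 1) :
    theta μ a l < (μ + 1) / 2 := by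
  unfold theta; nlinarith

lemma theta_strictMono {μ a : ℚ} (hμ1 : μ < 1) {l l' : ℚ} (h : l < l') :
    theta μ a l < theta μ a l' := by
  unfold theta; nlinarith

lemma theta_self (μ a : ℚ) : theta μ a a = μ := by unfold theta; ring

/-- The point of the interval `[μ_j, μ_j')` corresponding to `l`. -/
noncomputable def pt (j : ℕ) (l : Iq) : Iq :=
  if h : lam j ≤ l.1 then
    ⟨theta (mu g hGle kf lf j).1 (lam j) l.1, by
      obtain ⟨m0, m1⟩ := (mu g hGle kf lf j).2
      constructor
      · exact lt_of_lt_of_le m0 (theta_lb m1 h)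
      · have := theta_ub (a := lam j) (l := l.1) m1 (lam_nonneg j) l.2.2
        linarith⟩
  else l

lemma pt_val (j : ℕ) (l : Iq) (h : lam j ≤ l.1) :
    (pt g hGle kf lf j l).1 = theta (mu g hGle kf lf j).1 (lam j) l.1 := by
  rw [pt, dif_pos h]

lemma pt_lb (j : ℕ) (l : Iq) (h : lam j ≤ l.1) :
    (mu g hGle kf lf j).1 ≤ (pt g hGle kf lf j l).1 := by
  rw [pt_val g hGle kf lf j l h]
  exact theta_lb (mu g hGle kf lf j).2.2 h

lemma pt_ub (j : ℕ) (l : Iq) (h : lam j ≤ l.1) :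
    (pt g hGle kf lf j l).1 < (mup (mu g hGle kf lf j)).1 := by
  rw [pt_val g hGle kf lf j l h]
  have := theta_ub (μ := (mu g hGle kf lf j).1) (a := lam j) (l := l.1)
    (mu g hGle kf lf j).2.2 (lam_nonneg j) l.2.2
  exact this

lemma diag_step (n : ℕ) (s : Iq) (hs : s.1 < (mup (mu g hGle kf lf n)).1)
    (t : Iq) (ht : (mu g hGle kf lf (n + 1)).1 ≤ t.1) :
    P.prec ((g n).1 s) ((g (n + 1)).1 t) := by
  obtain ⟨ν, hν1, hν2⟩ := mu_spec₁ g hGle kf lf n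
  exact P.trans (P.trans ((g n).2 hs) hν1) ((g (n + 1)).2 (lt_of_lt_of_le hν2 ht))

lemma diag_chain (n : ℕ) (s : Iq) (hs : s.1 < (mup (mu g hGle kf lf n)).1) :
    ∀ j, n + 1 ≤ j → ∀ t : Iq, (mu g hGle kf lf j).1 ≤ t.1 →
      P.prec ((g n).1 s) ((g j).1 t) := by
  intro j hj
  induction j, hj using Nat.le_induction with
  | base => exact fun t ht => diag_step g hGle kf lf n s hs t ht
  | succ j hj ih =>
    intro t ht
    exact P.trans (ih (mu g hGle kf lf j) le_rfl)
      (diag_step g hGle kf lf j (mu g hGle kf lf j) (lt_mup _) t ht)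

/-- The diagonal path dominating a `pLe`-increasing sequence of paths. -/
noncomputable def diag : Iq → M := fun l => (g (idx l)).1 (pt g hGle kf lf (idx l) l)

lemma diag_isPath : P.IsPath (diag g hGle kf lf) := by
  intro l m hlm
  unfold diag
  rcases eq_or_lt_of_le (idx_mono hlm.le) with he | he
  · rw [show idx m = idx l from he.symm]
    apply (g (idx l)).2
    show (pt g hGle kf lf (idx l) l).1 < (pt g hGle kf lf (idx l) m).1
    have hl := (idx_spec l).1
    have hm : lam (idx l) ≤ m.1 := le_trans hl hlm.le
    rw [pt_val g hGle kf lf (idx l) l hl, pt_val g hGle kf lf (idx l) m hm]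
    exact theta_strictMono (mu g hGle kf lf (idx l)).2.2 hlm
  · exact diag_chain g hGle kf lf (idx l) _ (pt_ub g hGle kf lf (idx l) l (idx_spec l).1)
      (idx m) he _ (pt_lb g hGle kf lf (idx m) m (idx_spec m).1)

lemma diag_pLe (hsur : ∀ (k : ℕ) (l : Iq), ∃ n, kf (n + 1) = k ∧ lf (n + 1) = l ∧ k ≤ n + 1)
    (k : ℕ) (l : Iq) :
    ∃ m : Iq, P.prec ((g k).1 l) (diag g hGle kf lf m) := by
  obtain ⟨n, hkf, hlf, hkn⟩ := hsur k l
  obtain ⟨x, hx1, hx2⟩ := mu_spec₂ g hGle kf lf n (by rw [hkf]; exact hkn)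
  rw [hkf, hlf] at hx1
  have hb : 0 < lam (n + 1) ∧ lam (n + 1) < 1 := ⟨lam_pos (Nat.succ_pos n), lam_lt_one _⟩
  set mhat : Iq := ⟨lam (n + 1), hb⟩ with hmhat
  have hidx : idx mhat = n + 1 := idx_eq le_rfl (lam_lt (Nat.lt_succ_self _))
  refine ⟨mhat, ?_⟩
  unfold diag
  rw [hidx]
  refine P.trans hx1 ((g (n + 1)).2 ?_)
  show x.1 < (pt g hGle kf lf (n + 1) mhat).1
  rw [pt_val g hGle kf lf (n + 1) mhat le_rfl]
  show x.1 < theta (mu g hGle kf lf (n + 1)).1 (lam (n + 1)) (lam (n + 1))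
  rw [theta_self]
  exact hx2

lemma diag_values (m : Iq) : ∃ j t, diag g hGle kf lf m = (g j).1 t :=
  ⟨idx m, pt g hGle kf lf (idx m) m, rfl⟩

end Diag2

lemma exists_upperPath {M : Type*} [AddCommMonoid M] {P : PSgp M}
    (g : ℕ → P.Path) (hGle : ∀ n, pLe (g n) (g (n + 1))) :
    ∃ w : P.Path, (∀ k, pLe (g k) w) ∧ ∀ m : Iq, ∃ j t, w.1 m = (g j).1 t := by
  have : Nonempty (ℕ × Iq) := ⟨0, ⟨1/2, by norm_num⟩⟩
  obtain ⟨τ, hτ⟩ := exists_surjective_nat (ℕ × Iq)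
  set kf : ℕ → ℕ := fun n => (τ (Nat.unpair n).1).1 with hkf
  set lf : ℕ → Iq := fun n => (τ (Nat.unpair n).1).2 with hlf
  have hsur : ∀ (k : ℕ) (l : Iq), ∃ n, kf (n + 1) = k ∧ lf (n + 1) = l ∧ k ≤ n + 1 := by
    intro k l
    obtain ⟨m, hm⟩ := hτ (k, l)
    have hge : k + 1 ≤ Nat.pair m (k + 1) := Nat.right_le_pair m (k + 1)
    refine ⟨Nat.pair m (k + 1) - 1, ?_, ?_, by omega⟩
    · rw [hkf]
      simp only [show Nat.pair m (k + 1) - 1 + 1 = Nat.pair m (k + 1) by omega,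
        Nat.unpair_pair, hm]
    · rw [hlf]
      simp only [show Nat.pair m (k + 1) - 1 + 1 = Nat.pair m (k + 1) by omega,
        Nat.unpair_pair, hm]
  refine ⟨⟨diag g hGle kf lf, diag_isPath g hGle kf lf⟩, ?_, ?_⟩
  · intro k l
    exact diag_pLe g hGle kf lf hsur k l
  · intro m
    exact diag_values g hGle kf lf m

end PSgp
/-- The `ε`-cut-down `f_ε` of a path `f` is again a path; in `τ(S)` one has
`[f_ε] ≪ [f_{ε'}]` whenever `ε' < ε`, and `[f]` is the supremum of the `[f_ε]`. -/
theorem stmt7 {M : Type*} [AddCommMonoid M] (P : PSgp M) (f : P.Path) :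
    (∀ e : Iq, P.IsPath (P.cutdown f.1 e)) ∧
    (∀ e' e : Iq, e'.1 < e.1 →
      CuWayBelow (⟦P.cutPath f e⟧ : PSgp.Tau P) ⟦P.cutPath f e'⟧) ∧
    IsLUB (Set.range fun e : Iq => (⟦P.cutPath f e⟧ : PSgp.Tau P)) ⟦f⟧ := by
  classical
  have cutVal : ∀ (e l : Iq) (h : e.1 < l.1),
      (P.cutPath f e).1 l = f.1 ⟨l.1 - e.1, ⟨sub_pos.mpr h, by linarith [l.2.2, e.2.1]⟩⟩ := by
    intro e l h
    show P.cutdown f.1 e l = _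
    unfold PSgp.cutdown
    rw [dif_pos h]
  have cutVal0 : ∀ (e l : Iq), ¬ e.1 < l.1 → (P.cutPath f e).1 l = 0 := by
    intro e l h
    show P.cutdown f.1 e l = _
    unfold PSgp.cutdown
    rw [dif_neg h]
  refine ⟨fun e => P.cutdown_isPath f.2 e, ?_, ?_⟩
  · -- way-below
    intro e' e hee z hz s hlub hs
    by_contra hc
    push_neg at hc
    set g : ℕ → P.Path := fun k => (z k).out with hg
    have hout : ∀ k, (⟦g k⟧ : PSgp.Tau P) = z k := fun k => Quotient.out_eq _
    have hGle : ∀ k, PSgp.pLe (g k) (g (k + 1)) := by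
      intro k
      have : z k ≤ z (k + 1) := hz (Nat.le_succ k)
      rw [← hout k, ← hout (k + 1)] at this
      exact this
    have haS : 0 < 1 - e.1 ∧ 1 - e.1 < 1 := ⟨by linarith [e.2.2], by linarith [e.2.1]⟩
    set a : M := f.1 ⟨1 - e.1, haS⟩ with ha
    have H : ∀ (j : ℕ) (m : Iq), ¬ P.prec a ((g j).1 m) := by
      intro j m hjm
      apply hc j
      rw [← hout j]
      show PSgp.pLe (P.cutPath f e) (g j)
      intro l
      refine ⟨m, ?_⟩
      by_cases h : e.1 < l.1
      · rw [cutVal e l h]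
        refine P.trans (f.2 ?_) hjm
        show l.1 - e.1 < 1 - e.1
        linarith [l.2.2]
      · rw [cutVal0 e l h]
        exact P.zero_prec _
    obtain ⟨w, hw1, hw2⟩ := PSgp.exists_upperPath g hGle
    have hub : ∀ x ∈ Set.range z, x ≤ (⟦w⟧ : PSgp.Tau P) := by
      rintro x ⟨k, rfl⟩
      rw [← hout k]
      exact hw1 k
    have hsw : s ≤ (⟦w⟧ : PSgp.Tau P) := hlub.2 hub
    have h2 : (⟦P.cutPath f e'⟧ : PSgp.Tau P) ≤ ⟦w⟧ := le_trans hs hsw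
    have h2' : PSgp.pLe (P.cutPath f e') w := h2
    have hls : 0 < (1 - e.1 + e'.1 + 1) / 2 ∧ (1 - e.1 + e'.1 + 1) / 2 < 1 := by
      constructor
      · linarith [e.2.2, e'.2.1]
      · linarith [e'.2.1, e.2.1, hee]
    set ls : Iq := ⟨(1 - e.1 + e'.1 + 1) / 2, hls⟩ with hlsdef
    have hels : e'.1 < ls.1 := by
      show e'.1 < (1 - e.1 + e'.1 + 1) / 2
      linarith [e.2.2, e'.2.2]
    obtain ⟨m, hm⟩ := h2' ls
    rw [cutVal e' ls hels] at hm
    have haw : P.prec a (w.1 m) := by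
      refine P.trans (f.2 ?_) hm
      show 1 - e.1 < ls.1 - e'.1
      show 1 - e.1 < (1 - e.1 + e'.1 + 1) / 2 - e'.1
      linarith [e.2.1, e.2.2, e'.2.1]
    obtain ⟨j, t, hv⟩ := hw2 m
    rw [hv] at haw
    exact H j t haw
  · -- IsLUB
    constructor
    · rintro x ⟨e, rfl⟩
      show PSgp.pLe (P.cutPath f e) f
      intro l
      refine ⟨l, ?_⟩
      by_cases h : e.1 < l.1
      · rw [cutVal e l h]
        apply f.2
        show l.1 - e.1 < l.1
        linarith [e.2.1]
      · rw [cutVal0 e l h]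
        exact P.zero_prec _
    · intro u hu
      induction u using Quotient.inductionOn with
      | h p =>
        show PSgp.pLe f p
        intro l
        have hle : 0 < (1 - l.1) / 2 ∧ (1 - l.1) / 2 < 1 :=
          ⟨by linarith [l.2.2], by linarith [l.2.1]⟩
        set e : Iq := ⟨(1 - l.1) / 2, hle⟩ with he
        have hl' : 0 < l.1 + e.1 ∧ l.1 + e.1 < 1 := by
          constructor
          · show 0 < l.1 + (1 - l.1) / 2; linarith [l.2.1, l.2.2]
          · show l.1 + (1 - l.1) / 2 < 1; linarith [l.2.2]
        set l' : Iq := ⟨l.1 + e.1, hl'⟩ with hl'def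
        have hmem : (⟦P.cutPath f e⟧ : PSgp.Tau P) ∈
            Set.range fun e : Iq => (⟦P.cutPath f e⟧ : PSgp.Tau P) := ⟨e, rfl⟩
        have hup : (⟦P.cutPath f e⟧ : PSgp.Tau P) ≤ ⟦p⟧ := hu hmem
        have hup' : PSgp.pLe (P.cutPath f e) p := hup
        have hel' : e.1 < l'.1 := by
          show e.1 < l.1 + e.1
          linarith [l.2.1]
        obtain ⟨m, hm⟩ := hup' l'
        rw [cutVal e l' hel'] at hm
        refine ⟨m, ?_⟩
        convert hm using 2
        apply Subtype.ext
        show l.1 = l.1 + e.1 - e.1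
        ring
end

section
/- Let S be a P-semigroup. Then τ(S), the monoid of equivalence classes of (0,1) ∩ ℚ-indexed paths in S, equipped with the induced order and pointwise addition, is a Cu-semigroup: it satisfies axioms (O1)–(O4). -/
/-- Block endpoints: `tt n = 1 - 1/(n+1)`. -/
def tt (n : ℕ) : ℚ := 1 - 1/(n+1)

lemma tt_lt_succ (n : ℕ) : tt n < tt (n+1) := by
  have h : (1:ℚ)/(n+1+1) < 1/(n+1) := by
    apply one_div_lt_one_div_of_lt
    · positivity
    · linarith
  unfold tt; push_cast; linarith

lemma tt_mono : Monotone tt := monotone_nat_of_le_succ fun n => (tt_lt_succ n).le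

lemma tt_lt_one (n : ℕ) : tt n < 1 := by
  have : (0:ℚ) < 1/(n+1) := by positivity
  unfold tt; linarith

lemma tt_pos_succ (n : ℕ) : 0 < tt (n+1) := by
  have hn : (0:ℚ) ≤ n := Nat.cast_nonneg n
  have h : (1:ℚ)/(n+1+1) ≤ 1/2 := by
    rw [div_le_div_iff₀ (by positivity) (by norm_num)]; linarith
  unfold tt; push_cast; linarith

/-- Block index of a rational in `(0,1)`. -/
def blk (q : ℚ) : ℕ := ⌊(1-q)⁻¹⌋₊ - 1

lemma blk_spec {q : ℚ} (h0 : 0 < q) (h1 : q < 1) :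
    tt (blk q) ≤ q ∧ q < tt (blk q + 1) := by
  have h1q : (0:ℚ) < 1 - q := by linarith
  have hr : 1 ≤ (1-q)⁻¹ := by
    rw [le_inv_comm₀ one_pos h1q]; linarith
  have hfl : 1 ≤ ⌊(1-q)⁻¹⌋₊ := Nat.le_floor (by exact_mod_cast hr)
  set k := ⌊(1-q)⁻¹⌋₊ with hk
  have hk1 : blk q + 1 = k := Nat.sub_add_cancel hfl
  have hkpos : (0:ℚ) < k := by exact_mod_cast hfl
  have low : (k:ℚ) ≤ (1-q)⁻¹ := Nat.floor_le (by positivity)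
  have high : (1-q)⁻¹ < k+1 := Nat.lt_floor_add_one _
  have low' : (k:ℚ)*(1-q) ≤ 1 := by
    rw [inv_eq_one_div, le_div_iff₀ h1q] at low; linarith
  have high' : 1 < ((k:ℚ)+1)*(1-q) := by
    rw [inv_eq_one_div, div_lt_iff₀ h1q] at high; linarith
  have hcast : ((blk q : ℚ)) + 1 = (k:ℚ) := by exact_mod_cast hk1
  constructor
  · show 1 - 1/((blk q:ℚ)+1) ≤ q
    rw [hcast]
    have : (1:ℚ) - q ≤ 1/k := by rw [le_div_iff₀ hkpos]; nlinarith
    linarith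
  · show q < 1 - 1/(((blk q + 1 : ℕ):ℚ)+1)
    have hc2 : ((blk q + 1 : ℕ):ℚ) + 1 = (k:ℚ) + 1 := by push_cast; push_cast at hcast; linarith
    rw [hc2]
    have : (1:ℚ)/((k:ℚ)+1) < 1 - q := by rw [div_lt_iff₀ (by positivity)]; nlinarith
    linarith

lemma blk_eq {n : ℕ} {q : ℚ} (h0 : 0 < q) (h1 : q < 1)
    (hl : tt n ≤ q) (hu : q < tt (n+1)) : blk q = n := by
  obtain ⟨s1, s2⟩ := blk_spec h0 h1
  rcases lt_trichotomy (blk q) n with h | h | h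
  · have := tt_mono (Nat.succ_le_of_lt h)
    linarith
  · exact h
  · have := tt_mono (Nat.succ_le_of_lt h)
    linarith

lemma blk_mono {q q' : ℚ} (h0 : 0 < q) (h1 : q < 1) (h0' : 0 < q') (h1' : q' < 1)
    (h : q ≤ q') : blk q ≤ blk q' := by
  by_contra hc
  push_neg at hc
  have h2 := tt_mono (Nat.succ_le_of_lt hc)
  obtain ⟨s1, _⟩ := blk_spec h0 h1
  obtain ⟨_, s2'⟩ := blk_spec h0' h1'
  linarith

lemma blk_tt (n : ℕ) : blk (tt (n+1)) = n+1 :=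
  blk_eq (tt_pos_succ n) (tt_lt_one _) le_rfl (tt_lt_succ (n+1))

/-- The affine reparametrization of block `n` into the interval `((a+b)/2, b)`. -/
def hmap (n : ℕ) (a b q : ℚ) : ℚ :=
  (a+b)/2 + (q - tt n) / (tt (n+1) - tt n) * (b - (a+b)/2)

lemma hmap_bounds {n : ℕ} {a b q : ℚ} (hab : a < b) (h1 : tt n ≤ q) (h2 : q < tt (n+1)) :
    a < hmap n a b q ∧ hmap n a b q < b := by
  have hd : 0 < tt (n+1) - tt n := sub_pos.2 (tt_lt_succ n)
  set s := (q - tt n)/(tt (n+1) - tt n) with hs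
  have hs0 : 0 ≤ s := div_nonneg (by linarith) hd.le
  have hs1 : s < 1 := (div_lt_one hd).2 (by linarith)
  unfold hmap
  rw [← hs]
  constructor
  · nlinarith [mul_nonneg hs0 (show (0:ℚ) ≤ b - (a+b)/2 by linarith)]
  · nlinarith [mul_pos (show (0:ℚ) < 1 - s by linarith) (show (0:ℚ) < b - (a+b)/2 by linarith)]

lemma hmap_mono {n : ℕ} {a b q q' : ℚ} (hab : a < b) (hq : q < q') :
    hmap n a b q < hmap n a b q' := by
  have hd : 0 < tt (n+1) - tt n := sub_pos.2 (tt_lt_succ n)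
  have hss : (q - tt n)/(tt (n+1) - tt n) < (q' - tt n)/(tt (n+1) - tt n) :=
    div_lt_div_of_pos_right (by linarith) hd
  unfold hmap
  nlinarith [mul_pos (sub_pos.2 hss) (show (0:ℚ) < b - (a+b)/2 by linarith)]

/-- Cut-down parameters `rr n = 1 - 1/(n+2)`. -/
def rr (n : ℕ) : ℚ := 1 - 1/(n+2)

lemma rr_pos (n : ℕ) : 0 < rr n := by
  have hn : (0:ℚ) ≤ n := Nat.cast_nonneg n
  have h : (1:ℚ)/(n+2) ≤ 1/2 := by
    rw [div_le_div_iff₀ (by positivity) (by norm_num)]; linarith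
  unfold rr; linarith

lemma rr_lt_one (n : ℕ) : rr n < 1 := by
  have : (0:ℚ) < 1/(n+2) := by positivity
  unfold rr; linarith

lemma rr_succ (n : ℕ) : rr (n+1) = 1 - 1/((n:ℚ)+3) := by
  unfold rr; push_cast; ring_nf

lemma rr_lt_succ (n : ℕ) : rr n < rr (n+1) := by
  rw [rr_succ]
  have h : (1:ℚ)/(n+3) < 1/(n+2) := by
    apply one_div_lt_one_div_of_lt
    · positivity
    · linarith
  unfold rr; linarith


section Main

open PSgp

variable {M : Type*} [AddCommMonoid M] {P : PSgp M}

lemma addmk (f g : P.Path) : (⟦f⟧ : PSgp.Tau P) + ⟦g⟧ = ⟦f + g⟧ := rfl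

lemma add_out (x y : PSgp.Tau P) : x + y = ⟦x.out + y.out⟧ := by
  rw [← addmk, x.out_eq, y.out_eq]

lemma leT_out {x y : PSgp.Tau P} (h : x ≤ y) : PSgp.pLe x.out y.out := by
  rw [← x.out_eq, ← y.out_eq] at h
  exact (PSgp.leT_mk _ _).1 h

/-- The `n`-th cut-down of a path. -/
def cut (f : P.Path) (n : ℕ) : P.Path :=
  ⟨fun l => f.1 ⟨rr n * l.1, mul_pos (rr_pos n) l.2.1, by
      calc rr n * l.1 < rr n * 1 := by
            exact mul_lt_mul_of_pos_left l.2.2 (rr_pos n)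
        _ = rr n := mul_one _
        _ < 1 := rr_lt_one n⟩,
   fun l m h => f.2 (show rr n * l.1 < rr n * m.1 from (mul_lt_mul_iff_right₀ (rr_pos n)).2 h)⟩

lemma cut_mono (f : P.Path) : Monotone (fun n => (⟦cut f n⟧ : PSgp.Tau P)) :=
  monotone_nat_of_le_succ fun n => by
    rw [PSgp.leT_mk]
    intro l
    exact ⟨l, f.2 (show rr n * l.1 < rr (n+1) * l.1 from
      (mul_lt_mul_iff_left₀ l.2.1).2 (rr_lt_succ n))⟩

lemma cut_lub (f : P.Path) : IsLUB (Set.range fun n => (⟦cut f n⟧ : PSgp.Tau P)) ⟦f⟧ := by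
  constructor
  · rintro x ⟨n, rfl⟩
    rw [PSgp.leT_mk]
    intro l
    refine ⟨l, f.2 ?_⟩
    show rr n * l.1 < l.1
    nlinarith [rr_lt_one n, rr_pos n, l.2.1]
  · intro u hu
    induction u using Quotient.inductionOn with
    | _ h =>
      rw [PSgp.leT_mk]
      intro l
      obtain ⟨hl0, hl1⟩ := l.2
      set lam : Iq := ⟨(l.1+1)/2, by constructor <;> linarith⟩ with hlam
      have hlampos : (0:ℚ) < lam.1 := lam.2.1
      have hllam : l.1 < lam.1 := by show l.1 < (l.1+1)/2; linarith
      set q : ℚ := l.1 / lam.1 with hq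
      have hq1 : q < 1 := (div_lt_one hlampos).2 hllam
      have h1q : (0:ℚ) < 1 - q := by linarith
      obtain ⟨n, hn⟩ := exists_nat_gt ((1 - q)⁻¹)
      have e1 : (1:ℚ) < ((n:ℚ)+2)*(1-q) := by
        have h2 : (1-q)⁻¹ < (n:ℚ)+2 := lt_of_lt_of_le hn (by linarith)
        rw [inv_eq_one_div, div_lt_iff₀ h1q] at h2
        linarith
      have e2 : (1:ℚ)/((n:ℚ)+2) < 1 - q := by
        rw [div_lt_iff₀ (by positivity)]
        nlinarith
      have hqrr : q < rr n := by unfold rr; linarith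
      have hkey : l.1 < rr n * lam.1 := by
        rw [hq, div_lt_iff₀ hlampos] at hqrr
        linarith
      have hstep : P.prec (f.1 l) ((cut f n).1 lam) := f.2 hkey
      have h2 : PSgp.pLe (cut f n) h := (PSgp.leT_mk _ _).1 (hu ⟨n, rfl⟩)
      obtain ⟨mu, hmu⟩ := h2 lam
      exact ⟨mu, P.trans hstep hmu⟩

lemma cut_compact (f : P.Path) (n : ℕ) :
    ∃ mu0 : Iq, ∀ l : Iq, P.prec ((cut f n).1 l) ((cut f (n+1)).1 mu0) := by
  have hn : (0:ℚ) ≤ n := Nat.cast_nonneg n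
  set x : ℚ := 1/((n:ℚ)+2) with hxdef
  set y : ℚ := 1/((n:ℚ)+3) with hydef
  have hx : 0 < x := by positivity
  have hy : 0 < y := by positivity
  have hxy : y < x := by
    rw [hxdef, hydef]
    apply one_div_lt_one_div_of_lt
    · positivity
    · linarith
  have hx2 : x ≤ 1/2 := by
    rw [hxdef, div_le_div_iff₀ (by positivity) (by norm_num)]; linarith
  refine ⟨⟨1 - (x-y)/2, by constructor <;> linarith⟩, ?_⟩
  intro l
  apply f.2
  show rr n * l.1 < rr (n+1) * (1 - (x-y)/2)
  have hrn : rr n = 1 - x := rfl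
  have hrn1 : rr (n+1) = 1 - y := by rw [rr_succ]
  rw [hrn, hrn1]
  obtain ⟨hl0, hl1⟩ := l.2
  nlinarith [mul_pos hy (sub_pos.2 hxy)]

lemma sup_construction (z : ℕ → PSgp.Tau P) (hz : Monotone z) :
    ∃ G : P.Path, IsLUB (Set.range z) ⟦G⟧ ∧
      ∀ l : Iq, ∃ k : ℕ, ∃ m : Iq, P.prec (G.1 l) ((z k).out.1 m) := by
  classical
  set F : ℕ → P.Path := fun n => (z n).out with hF
  have hFle : ∀ {n n' : ℕ}, n ≤ n' → PSgp.pLe (F n) (F n') := fun {n n'} h =>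
    leT_out (hz h)
  have : Nonempty (ℕ × Iq) := ⟨(0, ⟨1/2, by norm_num⟩)⟩
  obtain ⟨e, he⟩ := exists_surjective_nat (ℕ × Iq)
  -- monotone sequence of path indices, covering all requirements
  set Mi : ℕ → ℕ := fun n => Nat.rec ((e 0).1) (fun k ih => max (ih + 1) ((e (k+1)).1)) n
    with hMi
  have hMisucc : ∀ n, Mi (n+1) = max (Mi n + 1) ((e (n+1)).1) := fun n => rfl
  have hMimono : Monotone Mi := monotone_nat_of_le_succ fun n => by
    rw [hMisucc]; exact le_trans (Nat.le_succ _) (le_max_left _ _)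
  have hMe : ∀ n, (e n).1 ≤ Mi n := by
    intro n
    cases n with
    | zero => exact le_refl _
    | succ k => rw [hMisucc]; exact le_max_right _ _
  -- the recursive choice of anchors
  have key : ∀ (n : ℕ) (t : {p : Iq × Iq // p.1.1 < p.2.1}),
      ∃ t' : {p : Iq × Iq // p.1.1 < p.2.1},
        P.prec ((F (Mi n)).1 t.val.2) ((F (Mi (n+1))).1 t'.val.1) ∧
        P.prec ((F (e n).1).1 (e n).2) ((F (Mi (n+1))).1 t'.val.1) := by
    intro n t
    obtain ⟨m1, hm1⟩ := hFle (hMimono (Nat.le_succ n)) t.val.2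
    obtain ⟨m2, hm2⟩ := hFle ((hMe n).trans (hMimono (Nat.le_succ n))) (e n).2
    have hmem : 0 < max m1.1 m2.1 ∧ max m1.1 m2.1 < 1 :=
      ⟨lt_max_of_lt_left m1.2.1, max_lt m1.2.2 m2.2.2⟩
    obtain ⟨a, ha⟩ := Iq.exists_gt ⟨max m1.1 m2.1, hmem⟩
    have ha1 : m1.1 < a.1 := lt_of_le_of_lt (le_max_left _ _) ha
    have ha2 : m2.1 < a.1 := lt_of_le_of_lt (le_max_right _ _) ha
    obtain ⟨b, hb⟩ := Iq.exists_gt a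
    exact ⟨⟨(a, b), hb⟩, P.trans hm1 ((F (Mi (n+1))).2 ha1),
      P.trans hm2 ((F (Mi (n+1))).2 ha2)⟩
  set AB : ℕ → {p : Iq × Iq // p.1.1 < p.2.1} := fun n =>
    Nat.rec ⟨(⟨1/3, by norm_num⟩, ⟨1/2, by norm_num⟩), by norm_num⟩
      (fun k ih => (key k ih).choose) n with hAB
  set A : ℕ → Iq := fun n => (AB n).val.1 with hA
  set B : ℕ → Iq := fun n => (AB n).val.2 with hB
  have hABlt : ∀ n, (A n).1 < (B n).1 := fun n => (AB n).prop
  have hstep1 : ∀ n, P.prec ((F (Mi n)).1 (B n)) ((F (Mi (n+1))).1 (A (n+1))) := fun n =>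
    (key n (AB n)).choose_spec.1
  have hstep2 : ∀ n, P.prec ((F (e n).1).1 (e n).2) ((F (Mi (n+1))).1 (A (n+1))) := fun n =>
    (key n (AB n)).choose_spec.2
  have chain : ∀ (a b : ℕ), a < b → P.prec ((F (Mi a)).1 (B a)) ((F (Mi b)).1 (A b)) := by
    intro a b hab
    induction b with
    | zero => exact absurd hab (Nat.not_lt_zero _)
    | succ b ih =>
      rcases Nat.lt_succ_iff_lt_or_eq.1 hab with h | h
      · exact P.trans (ih h) (P.trans ((F (Mi b)).2 (hABlt b)) (hstep1 b))
      · subst h; exact hstep1 _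
  -- the supremum path
  have hGmem : ∀ l : Iq,
      0 < hmap (blk l.1) (A (blk l.1)).1 (B (blk l.1)).1 l.1 ∧
      hmap (blk l.1) (A (blk l.1)).1 (B (blk l.1)).1 l.1 < 1 := by
    intro l
    obtain ⟨hs1, hs2⟩ := blk_spec l.2.1 l.2.2
    obtain ⟨hb1, hb2⟩ := hmap_bounds (hABlt (blk l.1)) hs1 hs2
    exact ⟨lt_trans (A (blk l.1)).2.1 hb1, lt_trans hb2 (B (blk l.1)).2.2⟩
  set pt : Iq → Iq := fun l =>
    ⟨hmap (blk l.1) (A (blk l.1)).1 (B (blk l.1)).1 l.1, hGmem l⟩ with hpt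
  have hptlt : ∀ l : Iq, (pt l).1 < (B (blk l.1)).1 := by
    intro l
    obtain ⟨hs1, hs2⟩ := blk_spec l.2.1 l.2.2
    exact (hmap_bounds (hABlt (blk l.1)) hs1 hs2).2
  have hptgt : ∀ l : Iq, (A (blk l.1)).1 < (pt l).1 := by
    intro l
    obtain ⟨hs1, hs2⟩ := blk_spec l.2.1 l.2.2
    exact (hmap_bounds (hABlt (blk l.1)) hs1 hs2).1
  have hFeq : ∀ {j j' : ℕ}, j = j' → ∀ (p q : Iq), p.1 < q.1 →
      P.prec ((F j).1 p) ((F j').1 q) := by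
    rintro j _ rfl p q h
    exact (F j).2 h
  have hGpath : P.IsPath (fun l => (F (Mi (blk l.1))).1 (pt l)) := by
    intro l m hlm
    rcases eq_or_lt_of_le (blk_mono l.2.1 l.2.2 m.2.1 m.2.2 hlm.le) with heq | hlt
    · refine hFeq (congrArg Mi heq) (pt l) (pt m) ?_
      show hmap (blk l.1) (A (blk l.1)).1 (B (blk l.1)).1 l.1 < _
      rw [heq]
      exact hmap_mono (hABlt (blk m.1)) hlm
    · exact P.trans ((F (Mi (blk l.1))).2 (hptlt l))
        (P.trans (chain _ _ hlt) ((F (Mi (blk m.1))).2 (hptgt m)))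
  refine ⟨⟨fun l => (F (Mi (blk l.1))).1 (pt l), hGpath⟩, ⟨?_, ?_⟩, ?_⟩
  · -- upper bound
    rintro x ⟨j, rfl⟩
    conv_lhs => rw [← (z j).out_eq]
    refine (PSgp.leT_mk _ _).2 ?_
    intro l
    obtain ⟨n, hn⟩ := he (j, l)
    have h2 := hstep2 n
    rw [hn] at h2
    set mu : Iq := ⟨tt (n+1), tt_pos_succ n, tt_lt_one _⟩ with hmu
    have hbmu : blk mu.1 = n + 1 := blk_tt n
    refine ⟨mu, P.trans h2 (hFeq (congrArg Mi hbmu.symm) (A (n+1)) (pt mu) ?_)⟩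
    show (A (n+1)).1 < hmap (blk mu.1) (A (blk mu.1)).1 (B (blk mu.1)).1 mu.1
    rw [hbmu]
    exact (hmap_bounds (hABlt (n+1)) le_rfl (tt_lt_succ (n+1))).1
  · -- least upper bound
    intro u hu
    conv_rhs => rw [← u.out_eq]
    refine (PSgp.leT_mk _ _).2 ?_
    intro l
    have h1 : P.prec ((F (Mi (blk l.1))).1 (pt l)) ((F (Mi (blk l.1))).1 (B (blk l.1))) :=
      (F (Mi (blk l.1))).2 (hptlt l)
    have h2 : PSgp.pLe (F (Mi (blk l.1))) u.out := leT_out (hu (Set.mem_range_self _))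
    obtain ⟨mu, hmu⟩ := h2 (B (blk l.1))
    exact ⟨mu, P.trans h1 hmu⟩
  · -- every value of G sits below a value of some z k
    intro l
    exact ⟨Mi (blk l.1), B (blk l.1), (F (Mi (blk l.1))).2 (hptlt l)⟩

lemma compact_wayBelow (g g' : P.Path) (mu0 : Iq)
    (h : ∀ l : Iq, P.prec (g.1 l) (g'.1 mu0)) :
    CuWayBelow (⟦g⟧ : PSgp.Tau P) ⟦g'⟧ := by
  intro z hz s hs hle
  obtain ⟨G, hlub, hb⟩ := sup_construction z hz
  have hsG : s = ⟦G⟧ := hs.unique hlub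
  have h1 : PSgp.pLe g' G := (PSgp.leT_mk _ _).1 (hsG ▸ hle)
  obtain ⟨mu, hmu⟩ := h1 mu0
  obtain ⟨k, m, hk⟩ := hb mu
  refine ⟨k, ?_⟩
  conv_rhs => rw [← (z k).out_eq]
  rw [PSgp.leT_mk]
  intro l
  exact ⟨m, P.trans (h l) (P.trans hmu hk)⟩

lemma wayBelow_compact {a b : PSgp.Tau P} (h : CuWayBelow a b) :
    ∃ mu0 : Iq, ∀ l : Iq, P.prec (a.out.1 l) (b.out.1 mu0) := by
  have hlub : IsLUB (Set.range fun n => (⟦cut b.out n⟧ : PSgp.Tau P)) b := by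
    have := cut_lub b.out
    rwa [b.out_eq] at this
  obtain ⟨k, hk⟩ := h _ (cut_mono b.out) b hlub le_rfl
  have hk' : PSgp.pLe a.out (cut b.out k) := by
    rw [← a.out_eq] at hk
    exact (PSgp.leT_mk _ _).1 hk
  refine ⟨⟨rr k, rr_pos k, rr_lt_one k⟩, fun l => ?_⟩
  obtain ⟨mu, hmu⟩ := hk' l
  refine P.trans hmu (b.out.2 ?_)
  show rr k * mu.1 < rr k
  nlinarith [rr_pos k, mu.2.1, mu.2.2]

lemma tau_add_mono {a b c d : PSgp.Tau P} (h1 : a ≤ b) (h2 : c ≤ d) : a + c ≤ b + d := by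
  rw [add_out a c, add_out b d, PSgp.leT_mk]
  exact PSgp.pLe_add (leT_out h1) (leT_out h2)

end Main

theorem stmt8 {M : Type*} [AddCommMonoid M] (P : PSgp M) : IsCuSgp (PSgp.Tau P) := by
  refine { zero_le := ?_, add_mono := ?_, O1 := ?_, O2 := ?_, O3 := ?_, O4 := ?_ }
  · intro a
    induction a using Quotient.inductionOn with
    | _ f =>
      show (⟦(0 : P.Path)⟧ : PSgp.Tau P) ≤ ⟦f⟧
      rw [PSgp.leT_mk]
      intro l
      exact ⟨l, P.zero_prec _⟩
  · intro a b c d h1 h2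
    exact tau_add_mono h1 h2
  · intro z hz
    obtain ⟨G, h1, _⟩ := sup_construction z hz
    exact ⟨⟦G⟧, h1⟩
  · intro a
    refine ⟨fun n => ⟦cut a.out n⟧, fun n => ?_, ?_⟩
    · obtain ⟨mu0, hmu0⟩ := cut_compact a.out n
      exact compact_wayBelow _ _ mu0 hmu0
    · have := cut_lub a.out
      rwa [a.out_eq] at this
  · intro a' a b' b h1 h2
    obtain ⟨mu1, hmu1⟩ := wayBelow_compact h1
    obtain ⟨mu2, hmu2⟩ := wayBelow_compact h2
    have hmem : 0 < max mu1.1 mu2.1 ∧ max mu1.1 mu2.1 < 1 :=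
      ⟨lt_max_of_lt_left mu1.2.1, max_lt mu1.2.2 mu2.2.2⟩
    obtain ⟨rho, hrho⟩ := Iq.exists_gt ⟨max mu1.1 mu2.1, hmem⟩
    have hr1 : mu1.1 < rho.1 := lt_of_le_of_lt (le_max_left _ _) hrho
    have hr2 : mu2.1 < rho.1 := lt_of_le_of_lt (le_max_right _ _) hrho
    have hkey : ∀ l : Iq, P.prec ((a'.out + b'.out).1 l) ((a.out + b.out).1 rho) := fun l =>
      P.add_prec (P.trans (hmu1 l) (a.out.2 hr1)) (P.trans (hmu2 l) (b.out.2 hr2))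
    have hwb := compact_wayBelow (a'.out + b'.out) (a.out + b.out) rho hkey
    rwa [← add_out, ← add_out] at hwb
  · intro z w hz hw s t hs ht
    obtain ⟨G, hGlub, hGb⟩ := sup_construction z hz
    obtain ⟨H, hHlub, hHb⟩ := sup_construction w hw
    have hsG : s = ⟦G⟧ := hs.unique hGlub
    have htH : t = ⟦H⟧ := ht.unique hHlub
    subst hsG
    subst htH
    constructor
    · rintro x ⟨n, rfl⟩
      exact tau_add_mono (hGlub.1 (Set.mem_range_self n)) (hHlub.1 (Set.mem_range_self n))
    · intro u hu
      rw [addmk]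
      conv_rhs => rw [← u.out_eq]
      rw [PSgp.leT_mk]
      intro l
      obtain ⟨k1, m1, hk1⟩ := hGb l
      obtain ⟨k2, m2, hk2⟩ := hHb l
      obtain ⟨a1, ha1⟩ := leT_out (hz (le_max_left k1 k2)) m1
      obtain ⟨a2, ha2⟩ := leT_out (hw (le_max_right k1 k2)) m2
      have hmem : 0 < max a1.1 a2.1 ∧ max a1.1 a2.1 < 1 :=
        ⟨lt_max_of_lt_left a1.2.1, max_lt a1.2.2 a2.2.2⟩
      obtain ⟨rho, hrho⟩ := Iq.exists_gt ⟨max a1.1 a2.1, hmem⟩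
      have e1 : P.prec (G.1 l) ((z (max k1 k2)).out.1 rho) :=
        P.trans hk1 (P.trans ha1
          ((z (max k1 k2)).out.2 (lt_of_le_of_lt (le_max_left _ _) hrho)))
      have e2 : P.prec (H.1 l) ((w (max k1 k2)).out.1 rho) :=
        P.trans hk2 (P.trans ha2
          ((w (max k1 k2)).out.2 (lt_of_le_of_lt (le_max_right _ _) hrho)))
      have h3 : PSgp.pLe ((z (max k1 k2)).out + (w (max k1 k2)).out) u.out := by
        have hzw : z (max k1 k2) + w (max k1 k2) ≤ u := hu ⟨max k1 k2, rfl⟩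
        rw [add_out, ← u.out_eq] at hzw
        exact (PSgp.leT_mk _ _).1 hzw
      obtain ⟨sig, hsig⟩ := h3 rho
      exact ⟨sig, P.trans (P.add_prec e1 e2) hsig⟩
end

section
/- Let S and T be P-semigroups and let α : S → T be a monoid morphism preserving the relations (a ≺ b implies α(a) ≺ α(b)). Then for every path f in S, α ∘ f is a path in T, and the induced map τ(α) : τ(S) → τ(T), [f] ↦ [α ∘ f], is a well-defined Cu-morphism: it preserves addition, order, zero, the way-below relation, and suprema of increasing sequences. -/
section AuxTest
namespace PSgpAux

open PSgp

variable {M : Type*} [AddCommMonoid M] {P : PSgp M}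

lemma pLe_chain (f : ℕ → P.Path) (hf : ∀ n, pLe (f n) (f (n + 1))) :
    ∀ {a b : ℕ}, a ≤ b → pLe (f a) (f b) := by
  intro a b h
  induction h with
  | refl => exact pLe_refl _
  | step _ ih => exact pLe_trans ih (hf _)

def midUp (u : Iq) : Iq :=
  ⟨(u.1 + 1) / 2, by obtain ⟨h0, h1⟩ := u.2; constructor <;> linarith⟩

lemma lt_midUp (u : Iq) : u.1 < (midUp u).1 := by
  obtain ⟨h0, h1⟩ := u.2
  show u.1 < (u.1 + 1) / 2
  linarith

lemma step_exists (f : ℕ → P.Path) (hf : ∀ n, pLe (f n) (f (n + 1)))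
    (a b : ℕ) (x y : Iq) :
    ∃ p : ℕ × Iq, P.prec ((f a).1 x) ((f p.1).1 p.2) ∧ P.prec ((f b).1 y) ((f p.1).1 p.2) := by
  obtain ⟨x', hx'⟩ := pLe_chain f hf (le_max_left a b) x
  obtain ⟨y', hy'⟩ := pLe_chain f hf (le_max_right a b) y
  have hmem : 0 < max x'.1 y'.1 ∧ max x'.1 y'.1 < 1 :=
    ⟨lt_max_of_lt_left x'.2.1, max_lt x'.2.2 y'.2.2⟩
  obtain ⟨u, hu⟩ := Iq.exists_gt ⟨_, hmem⟩
  exact ⟨(max a b, u),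
    P.trans hx' ((f _).2 (lt_of_le_of_lt (le_max_left _ _) hu)),
    P.trans hy' ((f _).2 (lt_of_le_of_lt (le_max_right _ _) hu))⟩

noncomputable def V (f : ℕ → P.Path) (hf : ∀ n, pLe (f n) (f (n + 1)))
    (e : ℕ → ℕ × Iq) : ℕ → ℕ × Iq
  | 0 => (0, ⟨1 / 2, by norm_num⟩)
  | j + 1 =>
    (step_exists f hf (V f hf e j).1 (e j).1 (midUp (V f hf e j).2) (e j).2).choose

lemma V_spec (f : ℕ → P.Path) (hf : ∀ n, pLe (f n) (f (n + 1)))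
    (e : ℕ → ℕ × Iq) (j : ℕ) :
    P.prec ((f (V f hf e j).1).1 (midUp (V f hf e j).2))
        ((f (V f hf e (j + 1)).1).1 (V f hf e (j + 1)).2) ∧
    P.prec ((f (e j).1).1 (e j).2)
        ((f (V f hf e (j + 1)).1).1 (V f hf e (j + 1)).2) := by
  show _ ∧ _
  rw [show V f hf e (j + 1) =
      (step_exists f hf (V f hf e j).1 (e j).1 (midUp (V f hf e j).2) (e j).2).choose from rfl]
  exact (step_exists f hf _ _ _ _).choose_spec

lemma V_chain (f : ℕ → P.Path) (hf : ∀ n, pLe (f n) (f (n + 1)))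
    (e : ℕ → ℕ × Iq) {j j' : ℕ} (h : j < j') :
    P.prec ((f (V f hf e j).1).1 (midUp (V f hf e j).2))
      ((f (V f hf e j').1).1 (V f hf e j').2) := by
  induction h with
  | refl => exact (V_spec f hf e j).1
  | step _ ih => exact P.trans ih (P.trans ((f _).2 (lt_midUp _)) ((V_spec f hf e _).1))

noncomputable def psi (f : ℕ → P.Path) (hf : ∀ n, pLe (f n) (f (n + 1)))
    (e : ℕ → ℕ × Iq) (j : ℕ) (ρ : ℚ) : ℚ :=
  (V f hf e j).2.1 + ((midUp (V f hf e j).2).1 - (V f hf e j).2.1) * (1 + max 0 (min ρ 1)) / 3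

lemma psi_gt (f : ℕ → P.Path) (hf : ∀ n, pLe (f n) (f (n + 1)))
    (e : ℕ → ℕ × Iq) (j : ℕ) (ρ : ℚ) : (V f hf e j).2.1 < psi f hf e j ρ := by
  have hd : (0:ℚ) < (midUp (V f hf e j).2).1 - (V f hf e j).2.1 := by
    linarith [lt_midUp (V f hf e j).2]
  have hc : (0:ℚ) < 1 + max 0 (min ρ 1) := by
    have := le_max_left (0:ℚ) (min ρ 1); linarith
  have := mul_pos hd hc
  unfold psi; linarith

lemma psi_lt (f : ℕ → P.Path) (hf : ∀ n, pLe (f n) (f (n + 1)))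
    (e : ℕ → ℕ × Iq) (j : ℕ) (ρ : ℚ) : psi f hf e j ρ < (midUp (V f hf e j).2).1 := by
  have hd : (0:ℚ) < (midUp (V f hf e j).2).1 - (V f hf e j).2.1 := by
    linarith [lt_midUp (V f hf e j).2]
  have hc2 : max 0 (min ρ 1) ≤ 1 := max_le zero_le_one (min_le_right _ _)
  have h1 : ((midUp (V f hf e j).2).1 - (V f hf e j).2.1) * (1 + max 0 (min ρ 1)) ≤
      ((midUp (V f hf e j).2).1 - (V f hf e j).2.1) * 2 :=
    mul_le_mul_of_nonneg_left (by linarith) (le_of_lt hd)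
  unfold psi; nlinarith

lemma psi_mem (f : ℕ → P.Path) (hf : ∀ n, pLe (f n) (f (n + 1)))
    (e : ℕ → ℕ × Iq) (j : ℕ) (ρ : ℚ) : 0 < psi f hf e j ρ ∧ psi f hf e j ρ < 1 :=
  ⟨lt_trans (V f hf e j).2.2.1 (psi_gt f hf e j ρ),
   lt_trans (psi_lt f hf e j ρ) (midUp (V f hf e j).2).2.2⟩

lemma psi_mono (f : ℕ → P.Path) (hf : ∀ n, pLe (f n) (f (n + 1)))
    (e : ℕ → ℕ × Iq) (j : ℕ) {ρ ρ' : ℚ} (h0 : 0 ≤ ρ) (h : ρ < ρ') (h1 : ρ' ≤ 1) :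
    psi f hf e j ρ < psi f hf e j ρ' := by
  have hd : (0:ℚ) < (midUp (V f hf e j).2).1 - (V f hf e j).2.1 := by
    linarith [lt_midUp (V f hf e j).2]
  have e1 : max 0 (min ρ 1) = ρ := by rw [min_eq_left (by linarith), max_eq_right h0]
  have e2 : max 0 (min ρ' 1) = ρ' := by rw [min_eq_left h1, max_eq_right (by linarith)]
  unfold psi
  rw [e1, e2]
  have := mul_lt_mul_of_pos_left (show 1 + ρ < 1 + ρ' by linarith) hd
  linarith

lemma one_lt_q (t : Iq) : 1 < (1 - t.1)⁻¹ := by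
  have h0 : 0 < 1 - t.1 := by linarith [t.2.2]
  have h1 : 1 - t.1 < 1 := by linarith [t.2.1]
  exact one_lt_inv_iff₀.mpr ⟨h0, h1⟩

lemma q_lt_q {t t' : Iq} (h : t.1 < t'.1) : (1 - t.1)⁻¹ < (1 - t'.1)⁻¹ := by
  have h0 : 0 < 1 - t'.1 := by linarith [t'.2.2]
  have h1 : 1 - t'.1 < 1 - t.1 := by linarith
  gcongr

def Jst (t : Iq) : ℕ := ⌊(1 - t.1)⁻¹⌋₊

noncomputable def rst (t : Iq) : ℚ := (1 - t.1)⁻¹ - (Jst t : ℚ)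

lemma Jst_mono {t t' : Iq} (h : t.1 < t'.1) : Jst t ≤ Jst t' :=
  Nat.floor_mono (le_of_lt (q_lt_q h))

lemma rst_nonneg (t : Iq) : 0 ≤ rst t := by
  unfold rst Jst
  have := Nat.floor_le (le_of_lt (lt_trans zero_lt_one (one_lt_q t)))
  linarith

lemma rst_lt_one (t : Iq) : rst t < 1 := by
  unfold rst Jst
  have := Nat.lt_floor_add_one ((1 - t.1)⁻¹)
  linarith

lemma rst_lt {t t' : Iq} (hJ : Jst t = Jst t') (h : t.1 < t'.1) : rst t < rst t' := by
  unfold rst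
  rw [hJ]
  have := q_lt_q h
  linarith

lemma exists_dominating (f : ℕ → P.Path) (hf : ∀ n, pLe (f n) (f (n + 1))) :
    ∃ k : P.Path, (∀ n, pLe (f n) k) ∧ ∀ l : Iq, ∃ n m, P.prec (k.1 l) ((f n).1 m) := by
  have : Nonempty Iq := ⟨⟨1/2, by norm_num⟩⟩
  obtain ⟨e, he⟩ := exists_surjective_nat (ℕ × Iq)
  have hpath : P.IsPath (fun t : Iq =>
      (f (V f hf e (Jst t)).1).1 ⟨psi f hf e (Jst t) (rst t), psi_mem f hf e _ _⟩) := by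
    intro t t' htt
    have hJ : Jst t ≤ Jst t' := Jst_mono htt
    show P.prec ((f (V f hf e (Jst t)).1).1 ⟨psi f hf e (Jst t) (rst t), psi_mem f hf e _ _⟩)
      ((f (V f hf e (Jst t')).1).1 ⟨psi f hf e (Jst t') (rst t'), psi_mem f hf e _ _⟩)
    rcases lt_or_eq_of_le hJ with hlt | heq
    · exact P.trans ((f _).2 (psi_lt f hf e _ _))
        (P.trans (V_chain f hf e hlt) ((f _).2 (psi_gt f hf e _ _)))
    · rw [heq]
      exact (f _).2 (psi_mono f hf e _ (rst_nonneg t) (rst_lt heq htt) (le_of_lt (rst_lt_one t')))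
  refine ⟨⟨_, hpath⟩, ?_, ?_⟩
  · -- upper bound
    intro n l
    obtain ⟨i, hi⟩ := he (n, l)
    have hpos : (0:ℚ) < 2 * (i:ℚ) + 3 := by positivity
    have ht0mem : (0:ℚ) < 1 - 2 / (2 * (i:ℚ) + 3) ∧ 1 - 2 / (2 * (i:ℚ) + 3) < 1 := by
      constructor
      · have h2 : 2 / (2 * (i:ℚ) + 3) ≤ 2 / 3 := by
          rw [div_le_div_iff₀ hpos (by norm_num)]
          have : (0:ℚ) ≤ (i:ℚ) := Nat.cast_nonneg i
          linarith
        linarith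
      · have : 0 < 2 / (2 * (i:ℚ) + 3) := by positivity
        linarith
    set t0 : Iq := ⟨1 - 2 / (2 * (i:ℚ) + 3), ht0mem⟩ with ht0def
    have hq : (1 - t0.1)⁻¹ = (i:ℚ) + 3 / 2 := by
      show (1 - (1 - 2 / (2 * (i:ℚ) + 3)))⁻¹ = (i:ℚ) + 3 / 2
      rw [show (1:ℚ) - (1 - 2 / (2 * (i:ℚ) + 3)) = 2 / (2 * (i:ℚ) + 3) by ring, inv_div]
      ring
    have hJ : Jst t0 = i + 1 := by
      unfold Jst
      rw [hq, Nat.floor_eq_iff (by positivity)]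
      push_cast
      constructor <;> linarith
    refine ⟨t0, ?_⟩
    show P.prec ((f n).1 l)
      ((f (V f hf e (Jst t0)).1).1 ⟨psi f hf e (Jst t0) (rst t0), psi_mem f hf e _ _⟩)
    have h2 := (V_spec f hf e i).2
    rw [hi] at h2
    simp only [hJ]
    exact P.trans h2 ((f _).2 (psi_gt f hf e _ _))
  · -- values dominated by values of the f n
    intro t
    obtain ⟨m, hm⟩ :=
      Iq.exists_gt ⟨psi f hf e (Jst t) (rst t), psi_mem f hf e (Jst t) (rst t)⟩
    exact ⟨(V f hf e (Jst t)).1, m, (f _).2 hm⟩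

def cseq (n : ℕ) : Iq := ⟨1 - 1 / ((n:ℚ) + 2), by
  have h0 : (0:ℚ) < (n:ℚ) + 2 := by positivity
  constructor
  · have h2 : 1 / ((n:ℚ) + 2) ≤ 1 / 2 := by
      rw [div_le_div_iff₀ h0 (by norm_num)]
      have : (0:ℚ) ≤ (n:ℚ) := Nat.cast_nonneg n
      linarith
    linarith
  · have : 0 < 1 / ((n:ℚ) + 2) := by positivity
    linarith⟩

lemma cseq_mono {n n' : ℕ} (h : n ≤ n') : (cseq n).1 ≤ (cseq n').1 := by
  show 1 - 1 / ((n:ℚ) + 2) ≤ 1 - 1 / ((n':ℚ) + 2)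
  have hn : ((n:ℚ)) ≤ (n':ℚ) := by exact_mod_cast h
  have h1 : (0:ℚ) < (n:ℚ) + 2 := by positivity
  have h2 : (0:ℚ) < (n':ℚ) + 2 := by positivity
  have : 1 / ((n':ℚ) + 2) ≤ 1 / ((n:ℚ) + 2) := by
    rw [div_le_div_iff₀ h2 h1]; linarith
  linarith

lemma cseq_gt (l : Iq) : ∃ n, l.1 < (cseq n).1 := by
  obtain ⟨h0, h1⟩ := l.2
  obtain ⟨n, hn⟩ := exists_nat_gt (1 / (1 - l.1))
  refine ⟨n, ?_⟩
  show l.1 < 1 - 1 / ((n:ℚ) + 2)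
  have hl : (0:ℚ) < 1 - l.1 := by linarith
  have h2 : 1 / (1 - l.1) < (n:ℚ) + 2 := by linarith
  rw [div_lt_iff₀ hl] at h2
  have h4 : 1 / ((n:ℚ) + 2) < 1 - l.1 := by
    rw [div_lt_iff₀ (by positivity)]
    have := mul_comm ((n:ℚ) + 2) (1 - l.1)
    linarith
  linarith

def scaleIq (c t : Iq) : Iq := ⟨c.1 * t.1, mul_pos c.2.1 t.2.1,
  lt_trans (mul_lt_of_lt_one_right c.2.1 t.2.2) c.2.2⟩

def scPath (g : P.Path) (c : Iq) : P.Path :=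
  ⟨fun t => g.1 (scaleIq c t), fun t t' h => g.2 (by
    show c.1 * t.1 < c.1 * t'.1
    exact mul_lt_mul_of_pos_left h c.2.1)⟩

lemma scPath_le (g : P.Path) (c : Iq) : pLe (scPath g c) g := by
  intro t
  obtain ⟨m, hm⟩ := Iq.exists_gt (scaleIq c t)
  exact ⟨m, g.2 hm⟩

lemma scPath_mono (g : P.Path) {n n' : ℕ} (h : n ≤ n') :
    pLe (scPath g (cseq n)) (scPath g (cseq n')) := by
  intro t
  have hc := cseq_mono h
  have hpos' : 0 < (cseq n').1 := (cseq n').2.1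
  have ha : (cseq n).1 * t.1 < (cseq n').1 :=
    lt_of_lt_of_le (mul_lt_of_lt_one_right (cseq n).2.1 t.2.2) hc
  set ρ := (cseq n).1 * t.1 / (cseq n').1 with hρ
  have hρ0 : 0 < ρ := div_pos (mul_pos (cseq n).2.1 t.2.1) hpos'
  have hρ1 : ρ < 1 := (div_lt_one hpos').mpr ha
  refine ⟨⟨(ρ + 1) / 2, by constructor <;> linarith⟩, ?_⟩
  apply g.2
  show (cseq n).1 * t.1 < (cseq n').1 * ((ρ + 1) / 2)
  have hcc : (cseq n').1 * ρ = (cseq n).1 * t.1 := by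
    rw [hρ]; field_simp
  have := mul_lt_mul_of_pos_left (show ρ < (ρ + 1) / 2 by linarith) hpos'
  linarith

lemma scPath_lub (g : P.Path) (kb : P.Path)
    (h : ∀ n, pLe (scPath g (cseq n)) kb) : pLe g kb := by
  intro l
  obtain ⟨n, hn⟩ := cseq_gt l
  have hpos : 0 < (cseq n).1 := (cseq n).2.1
  have ht : 0 < l.1 / (cseq n).1 ∧ l.1 / (cseq n).1 < 1 :=
    ⟨div_pos l.2.1 hpos, (div_lt_one hpos).mpr hn⟩
  obtain ⟨m, hm⟩ := h n ⟨l.1 / (cseq n).1, ht⟩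
  have hm' : P.prec (g.1 (scaleIq (cseq n) ⟨l.1 / (cseq n).1, ht⟩)) (kb.1 m) := hm
  have heq : scaleIq (cseq n) ⟨l.1 / (cseq n).1, ht⟩ = l := Subtype.ext (by
    show (cseq n).1 * (l.1 / (cseq n).1) = l.1
    field_simp)
  rw [heq] at hm'
  exact ⟨m, hm'⟩

end PSgpAux
end AuxTest



/-- A relation-preserving monoid morphism `α : S → T` of `P`-semigroups sends paths to
paths, and induces a well-defined Cu-morphism `τ(α) : τ(S) → τ(T)`, `[f] ↦ [α ∘ f]`,
preserving addition, zero, order, the way-below relation and suprema of increasing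
sequences. -/
theorem stmt10 {M N : Type*} [AddCommMonoid M] [AddCommMonoid N]
    (P : PSgp M) (Q : PSgp N) (α : M → N)
    (hzero : α 0 = 0) (hadd : ∀ a b : M, α (a + b) = α a + α b)
    (hrel : ∀ ⦃a b : M⦄, P.prec a b → Q.prec (α a) (α b)) :
    (∀ f : P.Path, Q.IsPath (α ∘ f.1)) ∧
    ∃ T : PSgp.Tau P → PSgp.Tau Q,
      (∀ (f : P.Path) (g : Q.Path), (∀ l : Iq, g.1 l = α (f.1 l)) → T ⟦f⟧ = ⟦g⟧) ∧
      T 0 = 0 ∧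
      (∀ x y : PSgp.Tau P, T (x + y) = T x + T y) ∧
      Monotone T ∧
      (∀ x y : PSgp.Tau P, CuWayBelow x y → CuWayBelow (T x) (T y)) ∧
      (∀ (z : ℕ → PSgp.Tau P) (s : PSgp.Tau P), Monotone z → IsLUB (Set.range z) s →
        IsLUB (Set.range fun n => T (z n)) (T s)) := by
  classical
  have hpath : ∀ f : P.Path, Q.IsPath (α ∘ f.1) := fun f _ _ h => hrel (f.2 h)
  refine ⟨hpath, ?_⟩
  set Θ : P.Path → Q.Path := fun f => ⟨α ∘ f.1, hpath f⟩ with hΘdef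
  have hΘle : ∀ {f g : P.Path}, PSgp.pLe f g → PSgp.pLe (Θ f) (Θ g) := by
    intro f g h l
    obtain ⟨m, hm⟩ := h l
    exact ⟨m, hrel hm⟩
  set T : PSgp.Tau P → PSgp.Tau Q :=
    Quotient.map Θ (fun f g h => ⟨hΘle h.1, hΘle h.2⟩) with hTdef
  have hTmk : ∀ f : P.Path, T ⟦f⟧ = ⟦Θ f⟧ := fun _ => rfl
  have hmono : Monotone T := by
    intro x y h
    induction x using Quotient.inductionOn with | h f =>
    induction y using Quotient.inductionOn with | h g =>
    show PSgp.pLe (Θ f) (Θ g)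
    exact hΘle h
  refine ⟨T, ?_, ?_, ?_, hmono, ?_, ?_⟩
  · -- compatibility
    intro f g h
    rw [hTmk]
    congr 1
    exact Subtype.ext (funext fun l => (h l).symm)
  · -- zero
    have h0 : Θ (0 : P.Path) = 0 := Subtype.ext (funext fun _ => hzero)
    show (⟦Θ (0 : P.Path)⟧ : PSgp.Tau Q) = 0
    rw [h0]
    rfl
  · -- additivity
    intro x y
    induction x using Quotient.inductionOn with | h f =>
    induction y using Quotient.inductionOn with | h g =>
    show (⟦Θ (f + g)⟧ : PSgp.Tau Q) = ⟦Θ f + Θ g⟧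
    congr 1
    exact Subtype.ext (funext fun l => hadd (f.1 l) (g.1 l))
  · -- way-below
    intro x y hxy z hzmono s hs hle
    obtain ⟨g, rfl⟩ : ∃ g : P.Path, ⟦g⟧ = y := ⟨y.out, y.out_eq⟩
    obtain ⟨fx, rfl⟩ : ∃ fx : P.Path, ⟦fx⟧ = x := ⟨x.out, x.out_eq⟩
    -- representatives for z
    have hkqle : ∀ n, PSgp.pLe (z n).out (z (n + 1)).out := by
      intro n
      have h := hzmono (Nat.le_succ n)
      rw [← Quotient.out_eq (z n), ← Quotient.out_eq (z (n + 1))] at h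
      exact h
    obtain ⟨K, hKub, hKval⟩ := PSgpAux.exists_dominating (fun n => (z n).out) hkqle
    have hsK : s ≤ ⟦K⟧ := by
      apply hs.2
      rintro w ⟨n, rfl⟩
      rw [← Quotient.out_eq (z n)]
      exact hKub n
    have hgK : PSgp.pLe (Θ g) K := le_trans hle hsK
    -- the scaled sequence below y
    set zP : ℕ → PSgp.Tau P := fun n => ⟦PSgpAux.scPath g (PSgpAux.cseq n)⟧ with hzP
    have hzPmono : Monotone zP := monotone_nat_of_le_succ fun n =>
      PSgpAux.scPath_mono g (Nat.le_succ n)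
    have hzPlub : IsLUB (Set.range zP) ⟦g⟧ := by
      constructor
      · rintro w ⟨n, rfl⟩
        exact PSgpAux.scPath_le g (PSgpAux.cseq n)
      · intro b hb
        obtain ⟨kb, rfl⟩ : ∃ kb : P.Path, ⟦kb⟧ = b := ⟨b.out, b.out_eq⟩
        show PSgp.pLe g kb
        exact PSgpAux.scPath_lub g kb fun n => hb ⟨n, rfl⟩
    obtain ⟨Kn, hKn⟩ := hxy zP hzPmono ⟦g⟧ hzPlub (le_refl _)
    -- hKn : ⟦fx⟧ ≤ zP Kn, i.e. pLe fx (scPath g (cseq Kn))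
    have hKn' : PSgp.pLe fx (PSgpAux.scPath g (PSgpAux.cseq Kn)) := hKn
    obtain ⟨m₁, hm₁⟩ := hgK (PSgpAux.cseq Kn)
    obtain ⟨n', m', hn'⟩ := hKval m₁
    refine ⟨n', ?_⟩
    rw [← Quotient.out_eq (z n')]
    show PSgp.pLe (Θ fx) ((z n').out)
    intro l
    obtain ⟨t, ht⟩ := hKn' l
    have ht' : P.prec (fx.1 l) (g.1 (PSgpAux.scaleIq (PSgpAux.cseq Kn) t)) := ht
    have hlt : (PSgpAux.scaleIq (PSgpAux.cseq Kn) t).1 < (PSgpAux.cseq Kn).1 :=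
      mul_lt_of_lt_one_right (PSgpAux.cseq Kn).2.1 t.2.2
    have hchain : Q.prec (α (fx.1 l)) (α (g.1 (PSgpAux.cseq Kn))) :=
      hrel (P.trans ht' (g.2 hlt))
    exact ⟨m', Q.trans (Q.trans hchain hm₁) hn'⟩
  · -- suprema
    intro z s hzmono hs
    obtain ⟨h0, rfl⟩ : ∃ h0 : P.Path, ⟦h0⟧ = s := ⟨s.out, s.out_eq⟩
    constructor
    · rintro w ⟨n, rfl⟩
      exact hmono (hs.1 ⟨n, rfl⟩)
    · intro b hb
      obtain ⟨kb, rfl⟩ : ∃ kb : Q.Path, ⟦kb⟧ = b := ⟨b.out, b.out_eq⟩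
      have hfple : ∀ n, PSgp.pLe (z n).out (z (n + 1)).out := by
        intro n
        have h := hzmono (Nat.le_succ n)
        rw [← Quotient.out_eq (z n), ← Quotient.out_eq (z (n + 1))] at h
        exact h
      obtain ⟨K, hKub, hKval⟩ := PSgpAux.exists_dominating (fun n => (z n).out) hfple
      have hsK : (⟦h0⟧ : PSgp.Tau P) ≤ ⟦K⟧ := by
        apply hs.2
        rintro w ⟨n, rfl⟩
        rw [← Quotient.out_eq (z n)]
        exact hKub n
      have hsK' : PSgp.pLe h0 K := hsK
      show PSgp.pLe (Θ h0) kb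
      intro l
      obtain ⟨t, ht⟩ := hsK' l
      obtain ⟨n, m, hnm⟩ := hKval t
      have hzn : T (z n) ≤ ⟦kb⟧ := hb ⟨n, rfl⟩
      rw [← Quotient.out_eq (z n)] at hzn
      have hzn' : PSgp.pLe (Θ ((z n).out)) kb := hzn
      obtain ⟨m', hm'⟩ := hzn' m
      exact ⟨m', Q.trans (hrel (P.trans ht hnm)) hm'⟩
end

section
/- Let S be a Q-semigroup with auxiliary relation ≺. For a path f : (0,1) ∩ ℚ → S, define its endpoint f(1) := sup_λ f(λ). Then: (1) (f+g)(1) = f(1) + g(1); (2) if f ≾ g then f(1) ≤ g(1); (3) if [f] ≪ [g] in τ(S) then f(1) ≺ g(1); (4) if ([f_n]) is increasing in τ(S) with supremum [f], then f(1) = sup_n f_n(1). -/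
/-- A `Q`-semigroup: a positively ordered monoid satisfying (O1) and (O4), together
with an additive auxiliary relation. -/
structure QSgp (S : Type*) [AddCommMonoid S] [PartialOrder S] where
  prec : S → S → Prop
  prec_le : ∀ ⦃a b : S⦄, prec a b → a ≤ b
  prec_mono : ∀ ⦃a' a b b' : S⦄, a' ≤ a → prec a b → b ≤ b' → prec a' b'
  zero_prec : ∀ a : S, prec 0 a
  add_prec : ∀ ⦃a b c d : S⦄, prec a b → prec c d → prec (a + c) (b + d)
  zero_le : ∀ a : S, 0 ≤ a
  add_mono : ∀ ⦃a b c d : S⦄, a ≤ b → c ≤ d → a + c ≤ b + d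
  O1 : ∀ z : ℕ → S, Monotone z → ∃ s, IsLUB (Set.range z) s
  O4 : ∀ z w : ℕ → S, Monotone z → Monotone w → ∀ s t : S, IsLUB (Set.range z) s →
    IsLUB (Set.range w) t → IsLUB (Set.range fun n => z n + w n) (s + t)

/-- Every `Q`-semigroup is in particular a `P`-semigroup. -/
def QSgp.toPSgp {S : Type*} [AddCommMonoid S] [PartialOrder S] (Q : QSgp S) : PSgp S where
  prec := Q.prec
  trans := fun _ _ _ h1 h2 => Q.prec_mono (Q.prec_le h1) h2 le_rfl
  zero_prec := Q.zero_prec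
  add_prec := Q.add_prec


namespace MyAux

open PSgp

/-- The cofinal sequence `(n+1)/(n+2)` in `Iq`. -/
def w (n : ℕ) : Iq :=
  ⟨((n : ℚ) + 1) / ((n : ℚ) + 2), by positivity, by
    rw [div_lt_one (by positivity)]; linarith⟩

lemma w_mono {n m : ℕ} (h : n ≤ m) : (w n).1 ≤ (w m).1 := by
  show ((n : ℚ) + 1) / ((n : ℚ) + 2) ≤ ((m : ℚ) + 1) / ((m : ℚ) + 2)
  rw [div_le_div_iff₀ (by positivity) (by positivity)]
  have h' : (n : ℚ) ≤ m := by exact_mod_cast h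
  nlinarith

lemma exists_w_gt (q : ℚ) (h : q < 1) : ∃ n, q < (w n).1 := by
  obtain ⟨N, hN⟩ := exists_nat_gt (1 / (1 - q))
  refine ⟨N, ?_⟩
  show q < ((N : ℚ) + 1) / ((N : ℚ) + 2)
  rw [lt_div_iff₀ (by positivity)]
  have h1 : (0:ℚ) < 1 - q := by linarith
  rw [div_lt_iff₀ h1] at hN
  nlinarith

variable {S : Type*} [AddCommMonoid S] [PartialOrder S] (Q : QSgp S)

lemma pathLe (p : Q.toPSgp.Path) {a b : Iq} (h : a.1 ≤ b.1) : p.1 a ≤ p.1 b := by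
  rcases h.lt_or_eq with h | h
  · exact Q.prec_le (p.2 h)
  · rw [Subtype.ext h]

lemma ptrans {a b c : S} (h1 : Q.prec a b) (h2 : Q.prec b c) : Q.prec a c :=
  Q.prec_mono (Q.prec_le h1) h2 le_rfl

lemma ub_cofinal (p : Q.toPSgp.Path) :
    upperBounds (Set.range fun n : ℕ => p.1 (w n)) = upperBounds (Set.range p.1) := by
  apply Set.Subset.antisymm
  · rintro b hb x ⟨l, rfl⟩
    obtain ⟨n, hn⟩ := exists_w_gt l.1 l.2.2
    exact (pathLe Q p hn.le).trans (hb ⟨n, rfl⟩)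
  · rintro b hb x ⟨n, rfl⟩
    exact hb ⟨w n, rfl⟩

lemma lub_cofinal (p : Q.toPSgp.Path) (x : S) :
    IsLUB (Set.range fun n : ℕ => p.1 (w n)) x ↔ IsLUB (Set.range p.1) x := by
  unfold IsLUB IsLeast lowerBounds
  rw [ub_cofinal]

/-- Chunk endpoints `k/(k+1)`. -/
def c (k : ℕ) : ℚ := (k : ℚ) / ((k : ℚ) + 1)

lemma c_lt (k : ℕ) : c k < c (k + 1) := by
  unfold c
  rw [div_lt_div_iff₀ (by positivity) (by positivity)]
  push_cast
  nlinarith [Nat.cast_nonneg (α := ℚ) k]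

lemma c_mono : Monotone c := monotone_nat_of_le_succ fun k => (c_lt k).le

lemma c_nonneg (k : ℕ) : 0 ≤ c k := by unfold c; positivity

lemma c_lt_one (k : ℕ) : c k < 1 := by
  unfold c; rw [div_lt_one (by positivity)]; linarith

lemma exists_le_c {t : ℚ} (h : t < 1) : ∃ k, t ≤ c (k + 1) := by
  obtain ⟨N, hN⟩ := exists_nat_gt (1 / (1 - t))
  refine ⟨N, ?_⟩
  unfold c
  rw [le_div_iff₀ (by positivity)]
  have h1 : (0:ℚ) < 1 - t := by linarith
  rw [div_lt_iff₀ h1] at hN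
  push_cast
  nlinarith

/-- The chunk index of a point of `Iq`. -/
def K (t : Iq) : ℕ := Nat.find (exists_le_c t.2.2)

lemma K_le (t : Iq) : t.1 ≤ c (K t + 1) := Nat.find_spec (exists_le_c t.2.2)

lemma K_gt (t : Iq) : c (K t) < t.1 := by
  cases hK : K t with
  | zero =>
    simpa [c] using t.2.1
  | succ k =>
    have h := Nat.find_min (exists_le_c t.2.2) (show k < K t by omega)
    exact not_le.mp h

lemma K_mono {t t' : Iq} (h : t.1 ≤ t'.1) : K t ≤ K t' :=
  Nat.find_min' _ (h.trans (K_le t'))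

lemma K_eq {t : Iq} {k : ℕ} (h1 : c k < t.1) (h2 : t.1 ≤ c (k + 1)) : K t = k := by
  refine le_antisymm (Nat.find_min' _ h2) ?_
  by_contra hlt
  push_neg at hlt
  exact absurd ((K_le t).trans (c_mono (by omega))) (not_le.2 h1)

/-- Midpoint of the `k`-th chunk. -/
def mid (k : ℕ) : Iq :=
  ⟨(c k + c (k + 1)) / 2, by
    have h0 := c_nonneg k
    have h1 := c_lt k
    have h3 := c_lt_one (k + 1)
    exact ⟨by linarith, by linarith⟩⟩

lemma mid_gt (k : ℕ) : c k < (mid k).1 := by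
  have := c_lt k; show c k < (c k + c (k + 1)) / 2; linarith

lemma mid_le (k : ℕ) : (mid k).1 ≤ c (k + 1) := by
  have := c_lt k; show (c k + c (k + 1)) / 2 ≤ c (k + 1); linarith

lemma K_mid (k : ℕ) : K (mid k) = k := K_eq (mid_gt k) (mid_le k)

variable (G : ℕ → Q.toPSgp.Path) (hG : ∀ n, pLe (G n) (G (n + 1)))

include hG

lemma pLe_chain {n m : ℕ} (h : n ≤ m) : pLe (G n) (G m) := by
  induction m, h using Nat.le_induction with
  | base => exact pLe_refl (G n)
  | succ m hm ih => exact pLe_trans ih (hG m)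

lemma step_ex (k : ℕ) (prev : Iq) :
    ∃ p : Iq × Iq, p.1.1 < p.2.1 ∧ Q.prec ((G k).1 prev) ((G (k + 1)).1 p.1) ∧
      ∀ n, n ≤ k + 1 → Q.prec ((G n).1 (w (k + 1))) ((G (k + 1)).1 p.1) := by
  obtain ⟨m0, hm0⟩ := hG k prev
  have hc : ∀ n, ∃ m : Iq, n ≤ k + 1 → Q.prec ((G n).1 (w (k + 1))) ((G (k + 1)).1 m) := by
    intro n
    by_cases h : n ≤ k + 1
    · obtain ⟨m, hm⟩ := pLe_chain Q G hG h (w (k + 1))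
      exact ⟨m, fun _ => hm⟩
    · exact ⟨w 0, fun hcon => absurd hcon h⟩
  choose mf hmf using hc
  set M : ℚ := ((Finset.range (k + 2)).sup' (by simp) fun n => (mf n).1) ⊔ m0.1 with hM
  have hMpos : 0 < M := lt_sup_of_lt_right m0.2.1
  have hMlt : M < 1 := max_lt ((Finset.sup'_lt_iff _).2 fun n _ => (mf n).2.2) m0.2.2
  set s : Iq := ⟨(M + 1) / 2, by constructor <;> linarith⟩ with hs
  have hsv : s.1 = (M + 1) / 2 := rfl
  have hgt : ∀ x : ℚ, x ≤ M → x < s.1 := fun x hx => by rw [hsv]; linarith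
  refine ⟨(s, ⟨(s.1 + 1) / 2, by constructor <;> linarith [s.2.1, s.2.2]⟩), ?_, ?_, ?_⟩
  · show s.1 < (s.1 + 1) / 2
    linarith [s.2.2]
  · exact Q.prec_mono le_rfl hm0 (pathLe Q _ (hgt m0.1 le_sup_right).le)
  · intro n hn
    refine Q.prec_mono le_rfl (hmf n hn) (pathLe Q _ (hgt (mf n).1 ?_).le)
    exact le_sup_of_le_left (Finset.le_sup' (f := fun n => (mf n).1) (Finset.mem_range.2 (by omega)))

omit hG in
lemma base_ex : ∃ p : Iq × Iq, p.1.1 < p.2.1 ∧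
    ∀ n, n ≤ 0 → Q.prec ((G n).1 (w 0)) ((G 0).1 p.1) := by
  obtain ⟨s, hs⟩ := Iq.exists_gt (w 0)
  obtain ⟨r, hr⟩ := Iq.exists_gt s
  refine ⟨(s, r), hr, fun n hn => ?_⟩
  have hn0 : n = 0 := Nat.le_zero.mp hn
  subst hn0
  exact (G 0).2 hs

lemma exists_seq : ∃ sr : ℕ → Iq × Iq,
    (∀ k, (sr k).1.1 < (sr k).2.1) ∧
    (∀ k, Q.prec ((G k).1 (sr k).2) ((G (k + 1)).1 (sr (k + 1)).1)) ∧
    (∀ k n, n ≤ k → Q.prec ((G n).1 (w k)) ((G k).1 (sr k).1)) := by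
  obtain ⟨p0, hp01, hp02⟩ := base_ex Q G
  choose st hst1 hst2 hst3 using step_ex Q G hG
  refine ⟨fun k => Nat.rec p0 (fun k ih => st k ih.2) k, ?_, ?_, ?_⟩
  · intro k
    cases k with
    | zero => exact hp01
    | succ k => exact hst1 k _
  · intro k
    exact hst2 k _
  · intro k
    cases k with
    | zero => exact fun n hn => hp02 n hn
    | succ k => exact fun n hn => hst3 k _ n hn

/-- The chosen interpolation data. -/
noncomputable def SR : ℕ → Iq × Iq := (exists_seq Q G hG).choose

lemma SR_lt (k : ℕ) : (SR Q G hG k).1.1 < (SR Q G hG k).2.1 :=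
  (exists_seq Q G hG).choose_spec.1 k

lemma SR_step (k : ℕ) :
    Q.prec ((G k).1 (SR Q G hG k).2) ((G (k + 1)).1 (SR Q G hG (k + 1)).1) :=
  (exists_seq Q G hG).choose_spec.2.1 k

lemma SR_w (k n : ℕ) (h : n ≤ k) :
    Q.prec ((G n).1 (w k)) ((G k).1 (SR Q G hG k).1) :=
  (exists_seq Q G hG).choose_spec.2.2 k n h

lemma SR_chain {k k' : ℕ} (h : k < k') :
    Q.prec ((G k).1 (SR Q G hG k).2) ((G k').1 (SR Q G hG k').1) := by
  induction k' with
  | zero => omega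
  | succ k' ih =>
    rcases Nat.lt_succ_iff_lt_or_eq.mp h with h | h
    · have h1 := ih h
      have h2 : ((G k').1 (SR Q G hG k').1) ≤ ((G k').1 (SR Q G hG k').2) :=
        pathLe Q _ (SR_lt Q G hG k').le
      exact ptrans Q (Q.prec_mono le_rfl h1 h2) (SR_step Q G hG k')
    · subst h
      exact SR_step Q G hG k

/-- The affine interpolation value. -/
noncomputable def pval (k : ℕ) (t : Iq) : ℚ :=
  (SR Q G hG k).1.1 +
    (t.1 - c k) / (c (k + 1) - c k) * ((SR Q G hG k).2.1 - (SR Q G hG k).1.1)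

lemma pval_bounds (k : ℕ) {t : Iq} (h1 : c k < t.1) (h2 : t.1 ≤ c (k + 1)) :
    (SR Q G hG k).1.1 < pval Q G hG k t ∧ pval Q G hG k t ≤ (SR Q G hG k).2.1 := by
  have hd : 0 < c (k + 1) - c k := by have := c_lt k; linarith
  have hrs : 0 < (SR Q G hG k).2.1 - (SR Q G hG k).1.1 := by have := SR_lt Q G hG k; linarith
  have hu1 : 0 < (t.1 - c k) / (c (k + 1) - c k) := div_pos (by linarith) hd
  have hu2 : (t.1 - c k) / (c (k + 1) - c k) ≤ 1 := (div_le_one hd).2 (by linarith)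
  unfold pval
  constructor
  · nlinarith
  · nlinarith

lemma pval_lt (k : ℕ) {t t' : Iq} (h : t.1 < t'.1) : pval Q G hG k t < pval Q G hG k t' := by
  have hd : 0 < c (k + 1) - c k := by have := c_lt k; linarith
  have hrs : 0 < (SR Q G hG k).2.1 - (SR Q G hG k).1.1 := by have := SR_lt Q G hG k; linarith
  have h3 : (t.1 - c k) / (c (k + 1) - c k) < (t'.1 - c k) / (c (k + 1) - c k) := by
    rw [div_lt_div_iff₀ hd hd]; nlinarith
  unfold pval
  exact add_lt_add_right (mul_lt_mul_of_pos_right h3 hrs) _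

/-- The reparametrization map. -/
noncomputable def Phi (t : Iq) : Iq :=
  ⟨pval Q G hG (K t) t, by
    obtain ⟨hb1, hb2⟩ := pval_bounds Q G hG (K t) (K_gt t) (K_le t)
    exact ⟨lt_trans (SR Q G hG (K t)).1.2.1 hb1, lt_of_le_of_lt hb2 (SR Q G hG (K t)).2.2.2⟩⟩

lemma Phi_gt (t : Iq) : (SR Q G hG (K t)).1.1 < (Phi Q G hG t).1 :=
  (pval_bounds Q G hG (K t) (K_gt t) (K_le t)).1

lemma Phi_le (t : Iq) : (Phi Q G hG t).1 ≤ (SR Q G hG (K t)).2.1 :=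
  (pval_bounds Q G hG (K t) (K_gt t) (K_le t)).2

/-- The supremum path. -/
noncomputable def HP : Q.toPSgp.Path :=
  ⟨fun t => (G (K t)).1 (Phi Q G hG t), by
    intro t t' h
    rcases (K_mono h.le).lt_or_eq with hk | hk
    · have h1 : (G (K t)).1 (Phi Q G hG t) ≤ (G (K t)).1 (SR Q G hG (K t)).2 :=
        pathLe Q _ (Phi_le Q G hG t)
      have h2 := SR_chain Q G hG hk
      have h3 : Q.prec ((G (K t')).1 (SR Q G hG (K t')).1) ((G (K t')).1 (Phi Q G hG t')) :=
        (G (K t')).2 (Phi_gt Q G hG t')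
      exact Q.prec_mono h1 (ptrans Q h2 h3) le_rfl
    · have hv : (Phi Q G hG t).1 < (Phi Q G hG t').1 := by
        show pval Q G hG (K t) t < pval Q G hG (K t') t'
        rw [← hk]
        exact pval_lt Q G hG (K t) h
      have h4 := (G (K t)).2 hv
      show Q.toPSgp.prec ((G (K t)).1 (Phi Q G hG t)) ((G (K t')).1 (Phi Q G hG t'))
      rw [← hk]
      exact h4⟩

lemma HP_ub (n : ℕ) : pLe (G n) (HP Q G hG) := by
  intro l
  obtain ⟨k0, hk0⟩ := exists_w_gt l.1 l.2.2
  refine ⟨mid (max n k0), ?_⟩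
  show Q.prec ((G n).1 l) ((G (K (mid (max n k0)))).1 (Phi Q G hG (mid (max n k0))))
  have hK := K_mid (max n k0)
  rw [hK]
  have h1 : (G n).1 l ≤ (G n).1 (w (max n k0)) :=
    pathLe Q _ (lt_of_lt_of_le hk0 (w_mono (le_max_right n k0))).le
  have h2 := SR_w Q G hG (max n k0) n (le_max_left n k0)
  have h3 : Q.prec ((G (max n k0)).1 (SR Q G hG (max n k0)).1)
      ((G (max n k0)).1 (Phi Q G hG (mid (max n k0)))) := by
    refine (G (max n k0)).2 ?_
    have := Phi_gt Q G hG (mid (max n k0))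
    rwa [hK] at this
  exact Q.prec_mono h1 (ptrans Q h2 h3) le_rfl

lemma HP_eval (m : Iq) : (HP Q G hG).1 m = (G (K m)).1 (Phi Q G hG m) := rfl

omit hG in
lemma shiftIdx_mem (n : ℕ) (t : Iq) : 0 < (w n).1 * t.1 ∧ (w n).1 * t.1 < 1 :=
  ⟨mul_pos (w n).2.1 t.2.1, by nlinarith [(w n).2.1, (w n).2.2, t.2.1, t.2.2]⟩

/-- The index shifted by `w n`. -/
def shiftIdx (n : ℕ) (t : Iq) : Iq := ⟨(w n).1 * t.1, shiftIdx_mem n t⟩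

omit hG in
omit G in
/-- The path `g` reparametrized by `t ↦ w n * t`. -/
def shiftPath (g : Q.toPSgp.Path) (n : ℕ) : Q.toPSgp.Path :=
  ⟨fun t => g.1 (shiftIdx n t), fun l m h =>
    g.2 (show (w n).1 * l.1 < (w n).1 * m.1 from mul_lt_mul_of_pos_left h (w n).2.1)⟩

end MyAux

/-- Properties of endpoints of paths in a `Q`-semigroup: endpoints are additive,
monotone with respect to `≾`, way-below in `τ(S)` yields `≺` of endpoints, and the
endpoint of the supremum of an increasing sequence in `τ(S)` is the supremum of the
endpoints. -/
theorem stmt12 {S : Type*} [AddCommMonoid S] [PartialOrder S] (Q : QSgp S)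
    (f g : Q.toPSgp.Path) (ef eg : S)
    (hf : IsLUB (Set.range f.1) ef) (hg : IsLUB (Set.range g.1) eg) :
    IsLUB (Set.range (f + g).1) (ef + eg) ∧
    (PSgp.pLe f g → ef ≤ eg) ∧
    (CuWayBelow (⟦f⟧ : PSgp.Tau Q.toPSgp) ⟦g⟧ → Q.prec ef eg) ∧
    (∀ (F : ℕ → Q.toPSgp.Path) (eF : ℕ → S),
      Monotone (fun n => (⟦F n⟧ : PSgp.Tau Q.toPSgp)) →
      IsLUB (Set.range fun n => (⟦F n⟧ : PSgp.Tau Q.toPSgp)) ⟦f⟧ →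
      (∀ n, IsLUB (Set.range (F n).1) (eF n)) →
      IsLUB (Set.range eF) ef) := by
  refine ⟨?_, ?_, ?_, ?_⟩
  · -- (1) endpoints are additive
    have hz : Monotone fun n : ℕ => f.1 (MyAux.w n) := fun a b h =>
      MyAux.pathLe Q f (MyAux.w_mono h)
    have hw' : Monotone fun n : ℕ => g.1 (MyAux.w n) := fun a b h =>
      MyAux.pathLe Q g (MyAux.w_mono h)
    have h1 : IsLUB (Set.range fun n : ℕ => f.1 (MyAux.w n)) ef :=
      (MyAux.lub_cofinal Q f ef).2 hf
    have h2 : IsLUB (Set.range fun n : ℕ => g.1 (MyAux.w n)) eg :=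
      (MyAux.lub_cofinal Q g eg).2 hg
    have h3 := Q.O4 _ _ hz hw' ef eg h1 h2
    exact (MyAux.lub_cofinal Q (f + g) (ef + eg)).1 h3
  · -- (2) monotone on endpoints
    intro h
    apply hf.2
    rintro x ⟨l, rfl⟩
    obtain ⟨m, hm⟩ := h l
    exact (Q.prec_le hm).trans (hg.1 ⟨m, rfl⟩)
  · -- (3) way-below gives prec
    intro h
    have hmono : Monotone fun n : ℕ => (⟦MyAux.shiftPath Q g n⟧ : PSgp.Tau Q.toPSgp) := by
      intro a b hab
      show PSgp.pLe (MyAux.shiftPath Q g a) (MyAux.shiftPath Q g b)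
      intro l
      obtain ⟨l', hl'⟩ := Iq.exists_gt l
      refine ⟨l', g.2 (show (MyAux.w a).1 * l.1 < (MyAux.w b).1 * l'.1 from ?_)⟩
      have hwab := MyAux.w_mono hab
      nlinarith [(MyAux.w a).2.1, l.2.1, l'.2.1, (MyAux.w b).2.1]
    have hlub : IsLUB (Set.range fun n : ℕ => (⟦MyAux.shiftPath Q g n⟧ : PSgp.Tau Q.toPSgp))
        ⟦g⟧ := by
      constructor
      · rintro x ⟨n, rfl⟩
        show PSgp.pLe (MyAux.shiftPath Q g n) g
        intro l
        exact ⟨l, g.2 (show (MyAux.w n).1 * l.1 < l.1 by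
          nlinarith [(MyAux.w n).2.1, (MyAux.w n).2.2, l.2.1])⟩
      · intro b hb
        obtain ⟨hpath, rfl⟩ := Quotient.exists_rep b
        show PSgp.pLe g hpath
        intro l
        obtain ⟨l', hl'⟩ := Iq.exists_gt l
        obtain ⟨n, hn⟩ := MyAux.exists_w_gt (l.1 / l'.1) ((div_lt_one l'.2.1).2 hl')
        have hlt : l.1 < (MyAux.w n).1 * l'.1 := (div_lt_iff₀ l'.2.1).1 hn
        have hnb : PSgp.pLe (MyAux.shiftPath Q g n) hpath := hb ⟨n, rfl⟩
        obtain ⟨μ, hμ⟩ := hnb l'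
        exact ⟨μ, MyAux.ptrans Q (g.2 (show l.1 < (MyAux.shiftIdx n l').1 from hlt)) hμ⟩
    obtain ⟨k, hk⟩ := h _ hmono _ hlub le_rfl
    have hk' : PSgp.pLe f (MyAux.shiftPath Q g k) := hk
    have h1 : ef ≤ g.1 (MyAux.w k) := by
      apply hf.2
      rintro x ⟨l, rfl⟩
      obtain ⟨m, hm⟩ := hk' l
      refine (Q.prec_le hm).trans (MyAux.pathLe Q g ?_)
      show (MyAux.w k).1 * m.1 ≤ (MyAux.w k).1
      nlinarith [(MyAux.w k).2.1, m.2.1, m.2.2]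
    obtain ⟨μ, hμ⟩ := Iq.exists_gt (MyAux.w k)
    exact Q.prec_mono h1 (g.2 hμ) (hg.1 ⟨μ, rfl⟩)
  · -- (4) endpoints of suprema
    intro F eF hFmono hFlub hFn
    have hG : ∀ n, PSgp.pLe (F n) (F (n + 1)) := fun n => hFmono (Nat.le_succ n)
    constructor
    · rintro x ⟨n, rfl⟩
      have hn : PSgp.pLe (F n) f := hFlub.1 ⟨n, rfl⟩
      apply (hFn n).2
      rintro x ⟨l, rfl⟩
      obtain ⟨m, hm⟩ := hn l
      exact (Q.prec_le hm).trans (hf.1 ⟨m, rfl⟩)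
    · intro b hb
      have hupper : (⟦MyAux.HP Q F hG⟧ : PSgp.Tau Q.toPSgp) ∈
          upperBounds (Set.range fun n => (⟦F n⟧ : PSgp.Tau Q.toPSgp)) := by
        rintro x ⟨n, rfl⟩
        exact MyAux.HP_ub Q F hG n
      have hfH : PSgp.pLe f (MyAux.HP Q F hG) := hFlub.2 hupper
      apply hf.2
      rintro x ⟨l, rfl⟩
      obtain ⟨m, hm⟩ := hfH l
      have h1 : (MyAux.HP Q F hG).1 m ≤ eF (MyAux.K m) :=
        (hFn (MyAux.K m)).1 ⟨MyAux.Phi Q F hG m, rfl⟩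
      exact (Q.prec_le hm).trans (h1.trans (hb ⟨MyAux.K m, rfl⟩))
end
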